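/- arXiv:math/0601226 — 4 statements merged into one kernel-verified Lean document; each statement's English description precedes it below -/
import Mathlib

section
/- Let X be a metric space and n ≥ 0 an integer. If S^n is a small scale Lipschitz extensor of X, then S^{n+1} is also a small scale Lipschitz extensor of X. -/
section Helpers

lemma coord_abs_le_norm {m : ℕ} (u : EuclideanSpace ℝ (Fin m)) (i : Fin m) : |u i| ≤ ‖u‖ := by
  rw [EuclideanSpace.norm_eq, show |u i| = Real.sqrt (|u i|^2) by rw [Real.sqrt_sq_eq_abs, abs_abs]]
  apply Real.sqrt_le_sqrt
  have := Finset.single_le_sum (f := fun j => ‖u j‖^2) (fun j _ => by positivity) (Finset.mem_univ i)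
  simpa [Real.norm_eq_abs] using this

lemma norm_le_sum_abs {m : ℕ} (u : EuclideanSpace ℝ (Fin m)) : ‖u‖ ≤ ∑ i, |u i| := by
  rw [EuclideanSpace.norm_eq]
  have h2 : ∑ i, ‖u i‖^2 ≤ (∑ i, |u i|)^2 := by
    simp only [Real.norm_eq_abs]
    exact Finset.sum_sq_le_sq_sum_of_nonneg (fun i _ => abs_nonneg _)
  calc Real.sqrt (∑ i, ‖u i‖^2) ≤ Real.sqrt ((∑ i, |u i|)^2) := Real.sqrt_le_sqrt h2
    _ = abs (∑ i, abs (u i)) := Real.sqrt_sq_eq_abs _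
    _ = ∑ i, |u i| := abs_of_nonneg (Finset.sum_nonneg fun i _ => abs_nonneg _)

lemma euclid_sq_norm {m : ℕ} (u : EuclideanSpace ℝ (Fin m)) : ‖u‖^2 = ∑ i, (u i)^2 := by
  rw [EuclideanSpace.norm_eq, Real.sq_sqrt (by positivity)]
  simp [sq_abs]

lemma normalize_lipschitz {m : ℕ} (r : ℝ) (hr : 0 < r) (u v : EuclideanSpace ℝ (Fin m))
    (hu : r ≤ ‖u‖) (hv : r ≤ ‖v‖) :
    ‖‖u‖⁻¹ • u - ‖v‖⁻¹ • v‖ ≤ (2 / r) * ‖u - v‖ := by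
  have hu0 : 0 < ‖u‖ := lt_of_lt_of_le hr hu
  have hv0 : 0 < ‖v‖ := lt_of_lt_of_le hr hv
  have key : ‖u‖⁻¹ • u - ‖v‖⁻¹ • v = ‖u‖⁻¹ • (u - v) + (‖u‖⁻¹ - ‖v‖⁻¹) • v := by
    rw [smul_sub, sub_smul]; abel
  rw [key]
  have h1 : ‖‖u‖⁻¹ • (u - v)‖ = ‖u‖⁻¹ * ‖u - v‖ := by
    rw [norm_smul, Real.norm_eq_abs, abs_of_pos (by positivity)]
  have h2 : ‖(‖u‖⁻¹ - ‖v‖⁻¹) • v‖ = |‖u‖⁻¹ - ‖v‖⁻¹| * ‖v‖ := by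
    rw [norm_smul, Real.norm_eq_abs]
  have h3 : |‖u‖⁻¹ - ‖v‖⁻¹| * ‖v‖ ≤ ‖u‖⁻¹ * ‖u - v‖ := by
    have he : |‖u‖⁻¹ - ‖v‖⁻¹| = |‖v‖ - ‖u‖| / (‖u‖ * ‖v‖) := by
      rw [inv_sub_inv hu0.ne' hv0.ne', abs_div,
        abs_of_pos (by positivity : (0:ℝ) < ‖u‖ * ‖v‖)]
    rw [he, div_mul_eq_mul_div, div_le_iff₀ (by positivity)]
    have h4 : |‖v‖ - ‖u‖| ≤ ‖u - v‖ := by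
      rw [abs_sub_comm]; exact abs_norm_sub_norm_le _ _
    calc |‖v‖ - ‖u‖| * ‖v‖ ≤ ‖u - v‖ * ‖v‖ :=
          mul_le_mul_of_nonneg_right h4 (norm_nonneg _)
      _ = ‖u‖⁻¹ * ‖u - v‖ * (‖u‖ * ‖v‖) := by field_simp
  calc ‖‖u‖⁻¹ • (u - v) + (‖u‖⁻¹ - ‖v‖⁻¹) • v‖
      ≤ ‖‖u‖⁻¹ • (u - v)‖ + ‖(‖u‖⁻¹ - ‖v‖⁻¹) • v‖ := norm_add_le _ _
    _ ≤ ‖u‖⁻¹ * ‖u - v‖ + ‖u‖⁻¹ * ‖u - v‖ := by rw [h1, h2]; linarith [h3]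
    _ = 2 * ‖u‖⁻¹ * ‖u - v‖ := by ring
    _ ≤ (2 / r) * ‖u - v‖ := by
        apply mul_le_mul_of_nonneg_right _ (norm_nonneg _)
        rw [div_eq_mul_inv]
        exact mul_le_mul_of_nonneg_left (inv_anti₀ hr hu) (by norm_num)

lemma min_lip (c a b : ℝ) : |min c a - min c b| ≤ |a - b| := by
  have h := (LipschitzWith.id.const_min c).dist_le_mul a b
  simpa [Real.dist_eq] using h

lemma clamp_lip (lo hi a b : ℝ) : |max lo (min hi a) - max lo (min hi b)| ≤ |a - b| := by
  have h := ((LipschitzWith.id.const_min hi).const_max lo).dist_le_mul a b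
  simpa [Real.dist_eq] using h

lemma ext_coord {X : Type*} [MetricSpace X] (A : Set X) (lam : ℝ) (hlam : 0 ≤ lam)
    (u : X → ℝ) (hu : ∀ a ∈ A, ∀ b ∈ A, |u a - u b| ≤ lam * dist a b) :
    ∃ g : X → ℝ, (∀ a ∈ A, g a = u a) ∧ ∀ x y, |g x - g y| ≤ lam * dist x y := by
  have hL : LipschitzOnWith lam.toNNReal u A := by
    apply LipschitzOnWith.of_dist_le_mul
    intro x hx y hy
    rw [Real.dist_eq]
    simpa [Real.coe_toNNReal lam hlam] using hu x hx y hy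
  obtain ⟨g, hg, hgeq⟩ := hL.extend_real
  refine ⟨g, fun a ha => (hgeq ha).symm, fun x y => ?_⟩
  have := hg.dist_le_mul x y
  rw [Real.dist_eq] at this
  rwa [Real.coe_toNNReal lam hlam] at this

lemma sc_exists (θ : ℝ) (hθ0 : 0 < θ) (hθ1 : θ ≤ 1/2) : ∃ sf cf : ℝ → ℝ,
    (∀ r r', |sf r - sf r'| ≤ |r - r'|) ∧
    (∀ r r', |cf r - cf r'| ≤ (1/θ) * |r - r'|) ∧
    (∀ r, (cf r)^2 + (sf r)^2 = 1) ∧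
    (∀ r, θ ≤ cf r) ∧ (∀ r, cf r ≤ 1) ∧ (∀ r, |sf r| ≤ 1) ∧
    (∀ r, |r| ≤ Real.sqrt (1-θ^2) → sf r = r) ∧
    (∀ r, |r| ≤ 1 → |sf r - r| ≤ θ^2) ∧
    (∀ r, Real.sqrt (1-θ^2) ≤ |r| → cf r = θ) ∧
    (∀ r, |r| ≤ Real.sqrt (1-θ^2) → cf r = Real.sqrt (1 - r^2)) := by
  set m := Real.sqrt (1 - θ^2) with hm
  have hθ2 : θ^2 ≤ 1 := by nlinarith
  have hm0 : 0 ≤ m := Real.sqrt_nonneg _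
  have hm2 : m^2 = 1 - θ^2 := Real.sq_sqrt (by nlinarith)
  have hm1 : m ≤ 1 := by nlinarith
  have hmθ : 1 - m ≤ θ^2 := by nlinarith
  refine ⟨fun r => max (-m) (min m r), fun r => Real.sqrt (1 - (max (-m) (min m r))^2),
    fun r r' => clamp_lip _ _ _ _, ?_, ?_, ?_, ?_, ?_, ?_, ?_, ?_, ?_⟩
  · -- cf lipschitz
    intro r r'
    set s := max (-m) (min m r)
    set s' := max (-m) (min m r')
    have hs : |s| ≤ m := by
      rw [abs_le]
      exact ⟨le_max_left _ _, max_le (by linarith) (min_le_left _ _)⟩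
    have hs' : |s'| ≤ m := by
      rw [abs_le]
      exact ⟨le_max_left _ _, max_le (by linarith) (min_le_left _ _)⟩
    have hss : |s - s'| ≤ |r - r'| := clamp_lip _ _ _ _
    have hsq : s^2 ≤ m^2 := sq_le_sq' (by cases abs_le.mp hs; linarith) (by cases abs_le.mp hs; linarith)
    have hsq' : s'^2 ≤ m^2 := sq_le_sq' (by cases abs_le.mp hs'; linarith) (by cases abs_le.mp hs'; linarith)
    set a := Real.sqrt (1 - s^2)
    set b := Real.sqrt (1 - s'^2)
    have ha2 : a^2 = 1 - s^2 := Real.sq_sqrt (by nlinarith)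
    have hb2 : b^2 = 1 - s'^2 := Real.sq_sqrt (by nlinarith)
    have haθ : θ ≤ a := by
      have : θ^2 ≤ 1 - s^2 := by nlinarith
      calc θ = Real.sqrt (θ^2) := (Real.sqrt_sq hθ0.le).symm
        _ ≤ a := Real.sqrt_le_sqrt this
    have hbθ : θ ≤ b := by
      have : θ^2 ≤ 1 - s'^2 := by nlinarith
      calc θ = Real.sqrt (θ^2) := (Real.sqrt_sq hθ0.le).symm
        _ ≤ b := Real.sqrt_le_sqrt this
    have hkey : |a - b| * (a + b) ≤ 2 * |r - r'| := by
      have h1 : |a - b| * (a + b) = |a^2 - b^2| := by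
        rw [show a^2 - b^2 = (a-b)*(a+b) by ring, abs_mul, abs_of_pos (show (0:ℝ) < a + b by linarith)]
      rw [h1, ha2, hb2]
      have h2 : |1 - s^2 - (1 - s'^2)| = |s' - s| * |s' + s| := by
        rw [← abs_mul]; congr 1; ring
      rw [h2]
      have h3 : |s' + s| ≤ 2 := by
        cases abs_le.mp hs; cases abs_le.mp hs'
        rw [abs_le]; constructor <;> linarith
      have h4 : |s' - s| ≤ |r - r'| := by rw [abs_sub_comm]; exact hss
      calc |s' - s| * |s' + s| ≤ |r - r'| * 2 :=
            mul_le_mul h4 h3 (abs_nonneg _) (abs_nonneg _)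
        _ = 2 * |r - r'| := by ring
    have h5 : |a - b| * (2 * θ) ≤ |a - b| * (a + b) :=
      mul_le_mul_of_nonneg_left (by linarith) (abs_nonneg _)
    rw [div_mul_eq_mul_div, le_div_iff₀ hθ0, one_mul]
    calc |a - b| * θ = (|a - b| * (2*θ))/2 := by ring
      _ ≤ (2 * |r - r'|)/2 := by linarith
      _ = |r - r'| := by ring
  · intro r
    set s := max (-m) (min m r)
    have hs : |s| ≤ m := by
      rw [abs_le]
      exact ⟨le_max_left _ _, max_le (by linarith) (min_le_left _ _)⟩
    have hsq : s^2 ≤ m^2 := sq_le_sq' (by cases abs_le.mp hs; linarith) (by cases abs_le.mp hs; linarith)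
    rw [Real.sq_sqrt (by nlinarith)]; ring
  · intro r
    set s := max (-m) (min m r)
    have hs : |s| ≤ m := by
      rw [abs_le]
      exact ⟨le_max_left _ _, max_le (by linarith) (min_le_left _ _)⟩
    have hsq : s^2 ≤ m^2 := sq_le_sq' (by cases abs_le.mp hs; linarith) (by cases abs_le.mp hs; linarith)
    have : θ^2 ≤ 1 - s^2 := by nlinarith
    calc θ = Real.sqrt (θ^2) := (Real.sqrt_sq hθ0.le).symm
      _ ≤ _ := Real.sqrt_le_sqrt this
  · intro r
    dsimp only
    have h := Real.sqrt_le_sqrt (show 1 - (max (-m) (min m r))^2 ≤ 1 by nlinarith [sq_nonneg (max (-m) (min m r))])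
    simpa using h
  · intro r
    have hs : |max (-m) (min m r)| ≤ m := by
      rw [abs_le]
      exact ⟨le_max_left _ _, max_le (by linarith) (min_le_left _ _)⟩
    linarith
  · intro r hr
    dsimp only
    cases' abs_le.mp hr with h1 h2
    rw [min_eq_right h2, max_eq_right h1]
  · intro r hr
    dsimp only
    rcases le_total r m with h1 | h1
    · rcases le_total (-m) r with h2 | h2
      · rw [min_eq_right h1, max_eq_right h2]; simp; nlinarith
      · rw [min_eq_right h1, max_eq_left h2]
        have : r ≥ -1 := by cases abs_le.mp hr; linarith
        rw [abs_of_nonneg (by linarith)]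
        linarith
    · rw [min_eq_left h1, max_eq_right (by linarith)]
      have : r ≤ 1 := by cases abs_le.mp hr; linarith
      rw [abs_of_nonpos (by linarith)]
      linarith
  · intro r hr
    dsimp only
    have hseq : (max (-m) (min m r))^2 = m^2 := by
      rcases le_total r 0 with h1 | h1
      · have : r ≤ -m := by
          rw [abs_of_nonpos h1] at hr; linarith
        rw [min_eq_right (by linarith), max_eq_left this]
        ring
      · have : m ≤ r := by rwa [abs_of_nonneg h1] at hr
        rw [min_eq_left this, max_eq_right (by linarith)]
    rw [hseq, hm2, show 1 - (1 - θ^2) = θ^2 by ring, Real.sqrt_sq hθ0.le]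
  · intro r hr
    dsimp only
    cases' abs_le.mp hr with h1 h2
    rw [min_eq_right h2, max_eq_right h1]

end Helpers

/-- A metric space `E` is a large scale Lipschitz extensor of `X`: there are `C, M > 0` such
that every `λ`-Lipschitz map on a nonempty subset of `X` with `0 < λ < M` extends to a
`(C·λ)`-Lipschitz map on `X`. -/
def LargeScaleLipschitzExtensorOf (X E : Type*) [MetricSpace X] [MetricSpace E] : Prop :=
  ∃ C : ℝ, 0 < C ∧ ∃ M : ℝ, 0 < M ∧ ∀ A : Set X, A.Nonempty →
    ∀ lam : ℝ, 0 < lam → lam < M →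
      ∀ f : A → E, (∀ a b : A, dist (f a) (f b) ≤ lam * dist (a : X) (b : X)) →
        ∃ g : X → E, (∀ a : A, g a = f a) ∧
          ∀ x y : X, dist (g x) (g y) ≤ C * lam * dist x y

/-- A metric space `E` is a small scale Lipschitz extensor of `X`: there are `C, M > 0` such
that every `λ`-Lipschitz map on a nonempty subset of `X` with `λ > M` extends to a
`(C·λ)`-Lipschitz map on `X`. -/
def SmallScaleLipschitzExtensorOf (X E : Type*) [MetricSpace X] [MetricSpace E] : Prop :=
  ∃ C : ℝ, 0 < C ∧ ∃ M : ℝ, 0 < M ∧ ∀ A : Set X, A.Nonempty →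
    ∀ lam : ℝ, M < lam →
      ∀ f : A → E, (∀ a b : A, dist (f a) (f b) ≤ lam * dist (a : X) (b : X)) →
        ∃ g : X → E, (∀ a : A, g a = f a) ∧
          ∀ x y : X, dist (g x) (g y) ≤ C * lam * dist x y

set_option maxHeartbeats 2000000 in
theorem sphere_succ_small_scale_extensor_of_sphere
    {X : Type*} [MetricSpace X] (n : ℕ)
    (h : SmallScaleLipschitzExtensorOf X
      (Metric.sphere (0 : EuclideanSpace ℝ (Fin (n + 1))) 1)) :
    SmallScaleLipschitzExtensorOf X
      (Metric.sphere (0 : EuclideanSpace ℝ (Fin (n + 2))) 1) := by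
  classical
  obtain ⟨C₀, hC₀, M₀, hM₀, H⟩ := h
  -- constants
  obtain ⟨θ, hθdef⟩ : ∃ θ : ℝ, θ = 1/(100*((n:ℝ)+2)) := ⟨_, rfl⟩
  have hn0 : (0:ℝ) ≤ (n:ℝ) := Nat.cast_nonneg n
  have hθ0 : 0 < θ := by rw [hθdef]; positivity
  have hθ200 : θ ≤ 1/200 := by
    rw [hθdef, div_le_div_iff₀ (by positivity) (by norm_num)]
    nlinarith
  have hθhalf : θ ≤ 1/2 := by linarith
  have hθn : ((n:ℝ)+1) * θ ≤ 1/100 := by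
    rw [hθdef, mul_one_div, div_le_div_iff₀ (by positivity) (by norm_num)]
    nlinarith
  have hδ : 2*((n:ℝ)+1)*θ + θ^2 ≤ 1/8 := by
    nlinarith [hθ0.le, hθ200, hθn, mul_le_mul hθ200 hθ200 hθ0.le (by norm_num : (0:ℝ) ≤ 1/200)]
  obtain ⟨Cσ, hCσdef⟩ : ∃ c : ℝ, c = 1 + ((n:ℝ)+1)*(1/θ + C₀*(2/θ)) := ⟨_, rfl⟩
  have hCσ0 : 0 < Cσ := by rw [hCσdef]; positivity
  obtain ⟨P, hPdef⟩ : ∃ p : ℝ, p = ((n:ℝ)+2) + Cσ := ⟨_, rfl⟩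
  have hP0 : 0 < P := by rw [hPdef]; positivity
  obtain ⟨Kc, hKcdef⟩ : ∃ k : ℝ, k = 8*P + 8 := ⟨_, rfl⟩
  have hKc0 : 0 < Kc := by rw [hKcdef]; positivity
  obtain ⟨C, hCdef⟩ : ∃ c : ℝ, c = 4*(P + Kc*((n:ℝ)+3)) := ⟨_, rfl⟩
  have hC0 : 0 < C := by rw [hCdef]; positivity
  refine ⟨C, hC0, M₀, hM₀, ?_⟩
  intro A hA lam hlam f hf
  have hlam0 : 0 < lam := hM₀.trans hlam
  have hfd : ∀ a b : ↥A, ‖(f a : EuclideanSpace ℝ (Fin (n+2))) - (f b : EuclideanSpace ℝ (Fin (n+2)))‖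
      ≤ lam * dist (a:X) (b:X) := by
    intro a b
    rw [← dist_eq_norm, ← Subtype.dist_eq]
    exact hf a b
  have hfnorm : ∀ a : ↥A, ‖(f a : EuclideanSpace ℝ (Fin (n+2)))‖ = 1 :=
    fun a => mem_sphere_zero_iff_norm.mp (f a).2
  -- the coordinatewise McShane extension, clamped to [-1,1]
  obtain ⟨F, hFa, hFbound, hFlipc⟩ :
      ∃ F : X → EuclideanSpace ℝ (Fin (n+2)),
        (∀ (a : X) (ha : a ∈ A), F a = (f ⟨a, ha⟩ : EuclideanSpace ℝ (Fin (n+2)))) ∧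
        (∀ x i, |F x i| ≤ 1) ∧ (∀ x y i, |F x i - F y i| ≤ lam * dist x y) := by
    have hext : ∀ i : Fin (n+2), ∃ g : X → ℝ,
        (∀ a (ha : a ∈ A), g a = (f ⟨a, ha⟩ : EuclideanSpace ℝ (Fin (n+2))) i) ∧
        ∀ x y, |g x - g y| ≤ lam * dist x y := by
      intro i
      obtain ⟨g, hg1, hg2⟩ := ext_coord A lam hlam0.le
        (fun x => if hx : x ∈ A then (f ⟨x, hx⟩ : EuclideanSpace ℝ (Fin (n+2))) i else 0)
        (by
          intro a ha b hb
          dsimp only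
          rw [dif_pos ha, dif_pos hb]
          exact le_trans (coord_abs_le_norm ((f ⟨a,ha⟩ : EuclideanSpace ℝ (Fin (n+2)))
            - (f ⟨b,hb⟩ : EuclideanSpace ℝ (Fin (n+2)))) i) (hfd ⟨a,ha⟩ ⟨b,hb⟩))
      refine ⟨g, fun a ha => ?_, hg2⟩
      rw [hg1 a ha, dif_pos ha]
    choose g0 hg0a hg0lip using hext
    refine ⟨fun x => WithLp.toLp 2 (fun i => max (-1) (min 1 (g0 i x)) : Fin (n+2) → ℝ), ?_, ?_, ?_⟩
    · intro a ha
      ext i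
      show max (-1) (min 1 (g0 i a)) = _
      rw [hg0a i a ha]
      have hb := coord_abs_le_norm (f ⟨a,ha⟩ : EuclideanSpace ℝ (Fin (n+2))) i
      rw [hfnorm ⟨a, ha⟩] at hb
      cases' abs_le.mp hb with h1 h2
      rw [min_eq_right h2, max_eq_right h1]
    · intro x i
      rw [abs_le]
      exact ⟨le_max_left _ _, max_le (by norm_num) (min_le_left _ _)⟩
    · intro x y i
      exact le_trans (clamp_lip _ _ _ _) (hg0lip i x y)
  have hFlip : ∀ x y, ‖F x - F y‖ ≤ ((n:ℝ)+2) * (lam * dist x y) := by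
    intro x y
    calc ‖F x - F y‖ ≤ ∑ i, |(F x - F y) i| := norm_le_sum_abs _
      _ ≤ ∑ _i : Fin (n+2), (lam * dist x y) :=
          Finset.sum_le_sum fun i _ => hFlipc x y i
      _ = ((n:ℝ)+2) * (lam * dist x y) := by
          rw [Finset.sum_const, Finset.card_univ, Fintype.card_fin, nsmul_eq_mul]
          push_cast; ring
  have hFnormle : ∀ x, ‖F x‖ ≤ (n:ℝ)+2 := by
    intro x
    calc ‖F x‖ ≤ ∑ i, |F x i| := norm_le_sum_abs _
      _ ≤ ∑ _i : Fin (n+2), (1:ℝ) := Finset.sum_le_sum fun i _ => hFbound x i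
      _ = (n:ℝ)+2 := by
          rw [Finset.sum_const, Finset.card_univ, Fintype.card_fin, nsmul_eq_mul]
          push_cast; ring
  -- the equatorial part of f
  obtain ⟨E, hEdef⟩ : ∃ E : ↥A → EuclideanSpace ℝ (Fin (n+1)),
      ∀ (a : ↥A) (j : Fin (n+1)), E a j = (f a : EuclideanSpace ℝ (Fin (n+2))) j.castSucc :=
    ⟨fun a => WithLp.toLp 2 (fun j => (f a : EuclideanSpace ℝ (Fin (n+2))) j.castSucc : Fin (n+1) → ℝ),
      fun a j => rfl⟩
  have hEsq : ∀ a : ↥A,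
      ‖E a‖^2 = 1 - ((f a : EuclideanSpace ℝ (Fin (n+2))) (Fin.last (n+1)))^2 := by
    intro a
    have h1 : ‖(f a : EuclideanSpace ℝ (Fin (n+2)))‖^2 = 1 := by rw [hfnorm a]; norm_num
    rw [euclid_sq_norm] at h1
    rw [Fin.sum_univ_castSucc] at h1
    rw [euclid_sq_norm]
    have h2 : ∑ j : Fin (n+1), (E a j)^2
        = ∑ j : Fin (n+1), ((f a : EuclideanSpace ℝ (Fin (n+2))) j.castSucc)^2 :=
      Finset.sum_congr rfl fun j _ => by rw [hEdef]
    rw [h2]; linarith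
  have hEdiff : ∀ a b : ↥A, ‖E a - E b‖ ≤ lam * dist (a:X) (b:X) := by
    intro a b
    have h1 : ‖E a - E b‖^2
        ≤ ‖(f a : EuclideanSpace ℝ (Fin (n+2))) - (f b : EuclideanSpace ℝ (Fin (n+2)))‖^2 := by
      have hterm : ∀ j : Fin (n+1), ((E a - E b) j)^2
          = (((f a : EuclideanSpace ℝ (Fin (n+2))) - (f b : EuclideanSpace ℝ (Fin (n+2)))) j.castSucc)^2 := by
        intro j
        rw [show (E a - E b) j = E a j - E b j from rfl, hEdef, hEdef]
        rfl
      have hL : ‖E a - E b‖^2 = ∑ j : Fin (n+1),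
          (((f a : EuclideanSpace ℝ (Fin (n+2))) - (f b : EuclideanSpace ℝ (Fin (n+2)))) j.castSucc)^2 := by
        rw [euclid_sq_norm]
        exact Finset.sum_congr rfl fun j _ => hterm j
      have hR : ‖(f a : EuclideanSpace ℝ (Fin (n+2))) - (f b : EuclideanSpace ℝ (Fin (n+2)))‖^2
          = (∑ j : Fin (n+1),
            (((f a : EuclideanSpace ℝ (Fin (n+2))) - (f b : EuclideanSpace ℝ (Fin (n+2)))) j.castSucc)^2)
          + (((f a : EuclideanSpace ℝ (Fin (n+2))) - (f b : EuclideanSpace ℝ (Fin (n+2)))) (Fin.last (n+1)))^2 := by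
        rw [euclid_sq_norm, Fin.sum_univ_castSucc]
      have hsq := sq_nonneg (((f a : EuclideanSpace ℝ (Fin (n+2)))
        - (f b : EuclideanSpace ℝ (Fin (n+2)))) (Fin.last (n+1)))
      rw [hL, hR]
      linarith
    have h2 := Real.sqrt_le_sqrt h1
    rw [Real.sqrt_sq (norm_nonneg _), Real.sqrt_sq (norm_nonneg _)] at h2
    exact h2.trans (hfd a b)
  -- the extended equatorial map w, from the S^n extensor property
  obtain ⟨w, hweq, hwlip⟩ :
      ∃ w : X → Metric.sphere (0 : EuclideanSpace ℝ (Fin (n+1))) 1,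
        (∀ (a : X) (ha : a ∈ A), θ ≤ ‖E ⟨a, ha⟩‖ →
          ((w a : EuclideanSpace ℝ (Fin (n+1))) = ‖E ⟨a, ha⟩‖⁻¹ • E ⟨a, ha⟩)) ∧
        (∀ x y : X, dist (w x) (w y) ≤ C₀ * ((2/θ)*lam) * dist x y) := by
    by_cases hA₁ : {x : X | ∃ hx : x ∈ A, θ ≤ ‖E ⟨x, hx⟩‖}.Nonempty
    · set A₁ : Set X := {x : X | ∃ hx : x ∈ A, θ ≤ ‖E ⟨x, hx⟩‖} with hA₁def
      have hmemv : ∀ p : ↥A₁, ∃ hp : p.1 ∈ A, θ ≤ ‖E ⟨p.1, hp⟩‖ := fun p => p.2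
      have hvmem : ∀ (a : X) (ha : a ∈ A), θ ≤ ‖E ⟨a,ha⟩‖ →
          ‖E ⟨a,ha⟩‖⁻¹ • E ⟨a,ha⟩ ∈ Metric.sphere (0 : EuclideanSpace ℝ (Fin (n+1))) 1 := by
        intro a ha hθa
        have hpos : 0 < ‖E ⟨a,ha⟩‖ := hθ0.trans_le hθa
        rw [mem_sphere_zero_iff_norm, norm_smul, Real.norm_eq_abs,
          abs_of_pos (inv_pos.mpr hpos), inv_mul_cancel₀ hpos.ne']
      set v : ↥A₁ → Metric.sphere (0 : EuclideanSpace ℝ (Fin (n+1))) 1 :=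
        fun p => ⟨‖E ⟨p.1, (hmemv p).choose⟩‖⁻¹ • E ⟨p.1, (hmemv p).choose⟩,
          hvmem p.1 (hmemv p).choose (hmemv p).choose_spec⟩ with hvdef
      have hvlip : ∀ p q : ↥A₁, dist (v p) (v q) ≤ ((2/θ)*lam) * dist (p:X) (q:X) := by
        intro p q
        rw [Subtype.dist_eq, dist_eq_norm]
        have hvp : (v p : EuclideanSpace ℝ (Fin (n+1)))
            = ‖E ⟨p.1, (hmemv p).choose⟩‖⁻¹ • E ⟨p.1, (hmemv p).choose⟩ := rfl
        have hvq : (v q : EuclideanSpace ℝ (Fin (n+1)))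
            = ‖E ⟨q.1, (hmemv q).choose⟩‖⁻¹ • E ⟨q.1, (hmemv q).choose⟩ := rfl
        rw [hvp, hvq]
        calc ‖‖E ⟨p.1, (hmemv p).choose⟩‖⁻¹ • E ⟨p.1, (hmemv p).choose⟩
              - ‖E ⟨q.1, (hmemv q).choose⟩‖⁻¹ • E ⟨q.1, (hmemv q).choose⟩‖
            ≤ (2/θ) * ‖E ⟨p.1, (hmemv p).choose⟩ - E ⟨q.1, (hmemv q).choose⟩‖ :=
              normalize_lipschitz θ hθ0 _ _ ((hmemv p).choose_spec) ((hmemv q).choose_spec)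
          _ ≤ (2/θ) * (lam * dist (p:X) (q:X)) := by
              apply mul_le_mul_of_nonneg_left _ (by positivity)
              exact hEdiff ⟨p.1, (hmemv p).choose⟩ ⟨q.1, (hmemv q).choose⟩
          _ = ((2/θ)*lam) * dist (p:X) (q:X) := by ring
      have hM' : M₀ < (2/θ)*lam := by
        have h1 : (1:ℝ) ≤ 2/θ := by
          rw [le_div_iff₀ hθ0]; linarith
        have h2 := mul_le_mul_of_nonneg_right h1 hlam0.le
        rw [one_mul] at h2
        linarith
      obtain ⟨w, hw1, hw2⟩ := H A₁ hA₁ ((2/θ)*lam) hM' v hvlip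
      refine ⟨w, ?_, hw2⟩
      intro a ha hθa
      have hmem1 : a ∈ A₁ := ⟨ha, hθa⟩
      have h2 := hw1 ⟨a, hmem1⟩
      have h3 : (w a : EuclideanSpace ℝ (Fin (n+1)))
          = (v ⟨a, hmem1⟩ : EuclideanSpace ℝ (Fin (n+1))) := by rw [h2]
      rw [h3]
    · refine ⟨fun _ => ⟨EuclideanSpace.single 0 (1:ℝ), by
        rw [mem_sphere_zero_iff_norm, EuclideanSpace.norm_single]; norm_num⟩, ?_, ?_⟩
      · intro a ha hθa
        exact absurd ⟨a, ha, hθa⟩ hA₁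
      · intro x y
        rw [dist_self]  -- constant map
        have : (0:ℝ) ≤ C₀ * ((2/θ)*lam) * dist x y := by positivity
        linarith
  have hwnorm : ∀ x, ‖(w x : EuclideanSpace ℝ (Fin (n+1)))‖ = 1 :=
    fun x => mem_sphere_zero_iff_norm.mp (w x).2
  have hwdiff : ∀ x y, ‖(w x : EuclideanSpace ℝ (Fin (n+1))) - (w y : EuclideanSpace ℝ (Fin (n+1)))‖
      ≤ C₀ * ((2/θ)*lam) * dist x y := by
    intro x y
    rw [← dist_eq_norm, ← Subtype.dist_eq]
    exact hwlip x y
  -- the 1-dimensional profile functions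
  obtain ⟨sf, cf, hsflip, hcflip, hscsq, hcfθ, hcf1, hsf1, hsfeq, hsfdiff, hcfθeq, hcfeq⟩ :=
    sc_exists θ hθ0 hθhalf
  -- the suspension-type map σm
  obtain ⟨σm, hσlast, hσcast⟩ :
      ∃ σm : X → EuclideanSpace ℝ (Fin (n+2)),
        (∀ x, σm x (Fin.last (n+1)) = sf (F x (Fin.last (n+1)))) ∧
        (∀ x (j : Fin (n+1)), σm x j.castSucc
          = cf (F x (Fin.last (n+1))) * (w x : EuclideanSpace ℝ (Fin (n+1))) j) := by
    refine ⟨fun x => WithLp.toLp 2 (Fin.snoc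
        (fun j => cf (F x (Fin.last (n+1))) * (w x : EuclideanSpace ℝ (Fin (n+1))) j)
        (sf (F x (Fin.last (n+1)))) : Fin (n+2) → ℝ), fun x => ?_, fun x j => ?_⟩
    · exact Fin.snoc_last (α := fun _ => ℝ) (sf (F x (Fin.last (n+1)))) (fun j => cf (F x (Fin.last (n+1))) * (w x : EuclideanSpace ℝ (Fin (n+1))) j)
    · exact Fin.snoc_castSucc (α := fun _ => ℝ) (sf (F x (Fin.last (n+1)))) (fun j => cf (F x (Fin.last (n+1))) * (w x : EuclideanSpace ℝ (Fin (n+1))) j) j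
  have hσnorm : ∀ x, ‖σm x‖ = 1 := by
    intro x
    have hsum : ∑ j : Fin (n+1), ((w x : EuclideanSpace ℝ (Fin (n+1))) j)^2 = 1 := by
      have h1 := euclid_sq_norm (w x : EuclideanSpace ℝ (Fin (n+1)))
      rw [hwnorm x] at h1
      simpa using h1.symm
    have h2 : ‖σm x‖^2 = 1 := by
      rw [euclid_sq_norm, Fin.sum_univ_castSucc]
      have h3 : ∀ j : Fin (n+1), (σm x j.castSucc)^2
          = (cf (F x (Fin.last (n+1))))^2 * ((w x : EuclideanSpace ℝ (Fin (n+1))) j)^2 :=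
        fun j => by rw [hσcast]; ring
      rw [Finset.sum_congr rfl fun j _ => h3 j, ← Finset.mul_sum, hsum, hσlast, mul_one]
      exact hscsq _
    calc ‖σm x‖ = Real.sqrt (‖σm x‖^2) := (Real.sqrt_sq (norm_nonneg _)).symm
      _ = 1 := by rw [h2, Real.sqrt_one]
  have hσlip : ∀ x y, ‖σm x - σm y‖ ≤ Cσ * (lam * dist x y) := by
    intro x y
    have hd0 : 0 ≤ dist x y := dist_nonneg
    have hlast : |σm x (Fin.last (n+1)) - σm y (Fin.last (n+1))| ≤ lam * dist x y := by
      rw [hσlast, hσlast]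
      exact (hsflip _ _).trans (hFlipc x y _)
    have hcoord : ∀ j : Fin (n+1), |σm x j.castSucc - σm y j.castSucc|
        ≤ (1/θ + C₀*(2/θ)) * (lam * dist x y) := by
      intro j
      rw [hσcast, hσcast]
      have hcd : |cf (F x (Fin.last (n+1))) - cf (F y (Fin.last (n+1)))|
          ≤ (1/θ) * (lam * dist x y) := by
        calc |cf (F x (Fin.last (n+1))) - cf (F y (Fin.last (n+1)))|
            ≤ (1/θ) * |F x (Fin.last (n+1)) - F y (Fin.last (n+1))| := hcflip _ _
          _ ≤ (1/θ) * (lam * dist x y) :=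
              mul_le_mul_of_nonneg_left (hFlipc x y _) (by positivity)
      have hwj : |(w x : EuclideanSpace ℝ (Fin (n+1))) j
          - (w y : EuclideanSpace ℝ (Fin (n+1))) j| ≤ C₀ * ((2/θ)*lam) * dist x y := by
        have h1 := coord_abs_le_norm ((w x : EuclideanSpace ℝ (Fin (n+1)))
          - (w y : EuclideanSpace ℝ (Fin (n+1)))) j
        exact le_trans h1 (hwdiff x y)
      have hwxj : |(w x : EuclideanSpace ℝ (Fin (n+1))) j| ≤ 1 :=
        le_trans (coord_abs_le_norm _ j) (le_of_eq (hwnorm x))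
      have hcfy1 : |cf (F y (Fin.last (n+1)))| ≤ 1 := by
        rw [abs_of_pos (hθ0.trans_le (hcfθ _))]
        exact hcf1 _
      calc |cf (F x (Fin.last (n+1))) * (w x : EuclideanSpace ℝ (Fin (n+1))) j
            - cf (F y (Fin.last (n+1))) * (w y : EuclideanSpace ℝ (Fin (n+1))) j|
          = |(cf (F x (Fin.last (n+1))) - cf (F y (Fin.last (n+1))))
              * (w x : EuclideanSpace ℝ (Fin (n+1))) j
            + cf (F y (Fin.last (n+1)))
              * ((w x : EuclideanSpace ℝ (Fin (n+1))) j
                - (w y : EuclideanSpace ℝ (Fin (n+1))) j)| := by ring_nf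
        _ ≤ |(cf (F x (Fin.last (n+1))) - cf (F y (Fin.last (n+1))))
              * (w x : EuclideanSpace ℝ (Fin (n+1))) j|
            + |cf (F y (Fin.last (n+1)))
              * ((w x : EuclideanSpace ℝ (Fin (n+1))) j
                - (w y : EuclideanSpace ℝ (Fin (n+1))) j)| := abs_add_le _ _
        _ ≤ ((1/θ) * (lam * dist x y)) * 1 + 1 * (C₀ * ((2/θ)*lam) * dist x y) := by
            rw [abs_mul, abs_mul]
            apply add_le_add
            · exact mul_le_mul hcd hwxj (abs_nonneg _) (by positivity)
            · exact mul_le_mul hcfy1 hwj (abs_nonneg _) (by norm_num)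
        _ = (1/θ + C₀*(2/θ)) * (lam * dist x y) := by ring
    calc ‖σm x - σm y‖ ≤ ∑ i, |(σm x - σm y) i| := norm_le_sum_abs _
      _ = ∑ j : Fin (n+1), |(σm x - σm y) j.castSucc| + |(σm x - σm y) (Fin.last (n+1))| :=
          Fin.sum_univ_castSucc _
      _ ≤ (∑ _j : Fin (n+1), (1/θ + C₀*(2/θ)) * (lam * dist x y)) + lam * dist x y := by
          apply add_le_add
          · exact Finset.sum_le_sum fun j _ => hcoord j
          · exact hlast
      _ = Cσ * (lam * dist x y) := by
          rw [Finset.sum_const, Finset.card_univ, Fintype.card_fin, nsmul_eq_mul, hCσdef]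
          push_cast; ring
  -- σ is close to F on A (and equal where ‖E‖ is not small)
  have hσA : ∀ (a : X) (ha : a ∈ A), ‖σm a - F a‖ ≤ 1/8 := by
    intro a ha
    have hτa : F a (Fin.last (n+1))
        = (f ⟨a,ha⟩ : EuclideanSpace ℝ (Fin (n+2))) (Fin.last (n+1)) := by
      rw [hFa a ha]
    set ta := (f ⟨a,ha⟩ : EuclideanSpace ℝ (Fin (n+2))) (Fin.last (n+1)) with htadef
    have hEsqa := hEsq ⟨a,ha⟩
    have hta2 : ta^2 ≤ 1 := by linarith [sq_nonneg ‖E ⟨a,ha⟩‖, hEsqa]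
    have hta1 : |ta| ≤ 1 := by
      have h := Real.sqrt_le_sqrt hta2
      rw [Real.sqrt_sq_eq_abs] at h
      simpa using h
    by_cases hcase : θ ≤ ‖E ⟨a, ha⟩‖
    · -- exact equality there
      have hEeq : ‖E ⟨a,ha⟩‖ = Real.sqrt (1 - ta^2) := by
        rw [← hEsqa, Real.sqrt_sq (norm_nonneg _)]
      have htam : |ta| ≤ Real.sqrt (1-θ^2) := by
        have hE2 : θ^2 ≤ ‖E ⟨a,ha⟩‖^2 := pow_le_pow_left₀ hθ0.le hcase 2
        have h1 : ta^2 ≤ 1 - θ^2 := by linarith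
        calc |ta| = Real.sqrt (ta^2) := (Real.sqrt_sq_eq_abs ta).symm
          _ ≤ Real.sqrt (1-θ^2) := Real.sqrt_le_sqrt h1
      have heq : σm a = F a := by
        ext i
        refine Fin.lastCases ?_ ?_ i
        · rw [hσlast, hτa, hsfeq ta htam]
        · intro j
          rw [hσcast, hτa, hcfeq ta htam, ← hEeq, hweq a ha hcase, hFa a ha]
          rw [show (‖E ⟨a,ha⟩‖⁻¹ • E ⟨a,ha⟩ : EuclideanSpace ℝ (Fin (n+1))) j
            = ‖E ⟨a,ha⟩‖⁻¹ * E ⟨a,ha⟩ j from rfl, hEdef]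
          have hpos : 0 < ‖E ⟨a,ha⟩‖ := hθ0.trans_le hcase
          field_simp
      rw [heq, sub_self, norm_zero]; norm_num
    · push_neg at hcase
      have htam : Real.sqrt (1-θ^2) ≤ |ta| := by
        have hE2 : ‖E ⟨a,ha⟩‖^2 ≤ θ^2 := pow_le_pow_left₀ (norm_nonneg _) hcase.le 2
        have h1 : 1 - θ^2 ≤ ta^2 := by linarith
        calc Real.sqrt (1-θ^2) ≤ Real.sqrt (ta^2) := Real.sqrt_le_sqrt h1
          _ = |ta| := Real.sqrt_sq_eq_abs ta
      have hlast : |(σm a - F a) (Fin.last (n+1))| ≤ θ^2 := by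
        rw [show (σm a - F a) (Fin.last (n+1))
          = σm a (Fin.last (n+1)) - F a (Fin.last (n+1)) from rfl, hσlast, hτa]
        exact hsfdiff ta hta1
      have hcoord : ∀ j : Fin (n+1), |(σm a - F a) j.castSucc| ≤ 2*θ := by
        intro j
        rw [show (σm a - F a) j.castSucc = σm a j.castSucc - F a j.castSucc from rfl,
          hσcast, hτa, hcfθeq ta htam, hFa a ha]
        have h1 : |(f ⟨a,ha⟩ : EuclideanSpace ℝ (Fin (n+2))) j.castSucc| ≤ θ := by
          rw [← hEdef]
          exact le_trans (coord_abs_le_norm (E ⟨a,ha⟩) j) hcase.le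
        have h2 : |(w a : EuclideanSpace ℝ (Fin (n+1))) j| ≤ 1 :=
          le_trans (coord_abs_le_norm _ j) (le_of_eq (hwnorm a))
        calc |θ * (w a : EuclideanSpace ℝ (Fin (n+1))) j
              - (f ⟨a,ha⟩ : EuclideanSpace ℝ (Fin (n+2))) j.castSucc|
            ≤ |θ * (w a : EuclideanSpace ℝ (Fin (n+1))) j|
              + |(f ⟨a,ha⟩ : EuclideanSpace ℝ (Fin (n+2))) j.castSucc| := abs_sub _ _
          _ ≤ θ * 1 + θ := by
              apply add_le_add _ h1
              rw [abs_mul, abs_of_pos hθ0]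
              exact mul_le_mul_of_nonneg_left h2 hθ0.le
          _ = 2*θ := by ring
      calc ‖σm a - F a‖ ≤ ∑ i, |(σm a - F a) i| := norm_le_sum_abs _
        _ = ∑ j : Fin (n+1), |(σm a - F a) j.castSucc| + |(σm a - F a) (Fin.last (n+1))| :=
            Fin.sum_univ_castSucc _
        _ ≤ (∑ _j : Fin (n+1), 2*θ) + θ^2 := add_le_add (Finset.sum_le_sum fun j _ => hcoord j) hlast
        _ = 2*((n:ℝ)+1)*θ + θ^2 := by
            rw [Finset.sum_const, Finset.card_univ, Fintype.card_fin, nsmul_eq_mul]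
            push_cast; ring
        _ ≤ 1/8 := hδ
  -- the interpolation weight β
  obtain ⟨β, hβdef⟩ : ∃ β : X → ℝ, β = fun x => min 1 (Kc * lam * Metric.infDist x A) := ⟨_, rfl⟩
  have hβ0 : ∀ (a : X), a ∈ A → β a = 0 := by
    intro a ha
    rw [hβdef]
    dsimp only
    simp [Metric.infDist_zero_of_mem ha]
  have hβnonneg : ∀ x, 0 ≤ β x := by
    intro x
    rw [hβdef]
    dsimp only
    exact le_min (by norm_num) (mul_nonneg (mul_nonneg hKc0.le hlam0.le) Metric.infDist_nonneg)
  have hβle1 : ∀ x, β x ≤ 1 := fun x => by rw [hβdef]; exact min_le_left _ _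
  have hβlip : ∀ x y, |β x - β y| ≤ Kc * lam * dist x y := by
    intro x y
    rw [hβdef]
    dsimp only
    calc |min 1 (Kc * lam * Metric.infDist x A) - min 1 (Kc * lam * Metric.infDist y A)| ≤ |Kc * lam * Metric.infDist x A - Kc * lam * Metric.infDist y A| :=
          min_lip _ _ _
      _ = Kc * lam * |Metric.infDist x A - Metric.infDist y A| := by
          rw [← mul_sub, abs_mul, abs_of_pos (mul_pos hKc0 hlam0)]
      _ ≤ Kc * lam * dist x y := by
          apply mul_le_mul_of_nonneg_left _ (mul_pos hKc0 hlam0).le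
          have := (Metric.lipschitz_infDist_pt A).dist_le_mul x y
          rw [Real.dist_eq] at this
          simpa using this
  -- the transition estimate
  have htrans : ∀ x, β x < 1 → ‖F x - σm x‖ ≤ 1/4 := by
    intro x hx
    have hq : Kc * lam * Metric.infDist x A < 1 := by
      by_contra hq
      push_neg at hq
      rw [hβdef] at hx
      dsimp only at hx
      rw [min_eq_left hq] at hx
      exact lt_irrefl 1 hx
    have hKl : (0:ℝ) < Kc * lam := mul_pos hKc0 hlam0
    have hinf : Metric.infDist x A < 1/(Kc*lam) := by
      rw [lt_div_iff₀ hKl]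
      have hcomm : Metric.infDist x A * (Kc * lam) = Kc * lam * Metric.infDist x A := by ring
      linarith
    obtain ⟨a, haA, hda⟩ := (Metric.infDist_lt_iff hA).mp hinf
    have hd0 : 0 ≤ dist x a := dist_nonneg
    have hprod : Kc * lam * dist x a < 1 := by
      have h := mul_lt_mul_of_pos_left hda hKl
      rwa [mul_one_div, div_self hKl.ne'] at h
    have hld : lam * dist x a ≤ 1/Kc := by
      rw [le_div_iff₀ hKc0]
      have hcomm : lam * dist x a * Kc = Kc * lam * dist x a := by ring
      linarith
    have h1 : ‖F x - F a‖ ≤ ((n:ℝ)+2) * (lam * dist x a) := hFlip x a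
    have h2 : ‖F a - σm a‖ ≤ 1/8 := by rw [norm_sub_rev]; exact hσA a haA
    have h3 : ‖σm a - σm x‖ ≤ Cσ * (lam * dist x a) := by
      have := hσlip a x
      rwa [dist_comm a x] at this
    have hPK : P * (1/Kc) ≤ 1/8 := by
      rw [mul_one_div, div_le_iff₀ hKc0]
      rw [hKcdef]; linarith
    calc ‖F x - σm x‖ = ‖(F x - F a) + (F a - σm a) + (σm a - σm x)‖ := by
          congr 1; abel
      _ ≤ ‖(F x - F a) + (F a - σm a)‖ + ‖σm a - σm x‖ := norm_add_le _ _
      _ ≤ ‖F x - F a‖ + ‖F a - σm a‖ + ‖σm a - σm x‖ := by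
          linarith [norm_add_le (F x - F a) (F a - σm a)]
      _ ≤ ((n:ℝ)+2) * (lam * dist x a) + 1/8 + Cσ * (lam * dist x a) := by linarith
      _ = P * (lam * dist x a) + 1/8 := by rw [hPdef]; ring
      _ ≤ P * (1/Kc) + 1/8 := by
          have := mul_le_mul_of_nonneg_left hld hP0.le
          linarith
      _ ≤ 1/8 + 1/8 := by linarith
      _ = 1/4 := by norm_num
  -- the interpolated map G
  obtain ⟨G, hGdef⟩ : ∃ G : X → EuclideanSpace ℝ (Fin (n+2)),
      G = fun x => (1 - β x) • F x + β x • σm x := ⟨_, rfl⟩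
  have hGa : ∀ (a : X) (ha : a ∈ A), G a = F a := by
    intro a ha
    rw [hGdef]
    dsimp only
    simp only [hβ0 a ha]
    rw [sub_zero, one_smul, zero_smul, add_zero]
  have hGlow : ∀ x, 1/2 ≤ ‖G x‖ := by
    intro x
    rcases lt_or_ge (β x) 1 with hx | hx
    · have hid : G x = σm x + (1 - β x) • (F x - σm x) := by
        rw [hGdef]; module
      have h1 : ‖(1 - β x) • (F x - σm x)‖ ≤ 1/4 := by
        rw [norm_smul, Real.norm_eq_abs, abs_of_nonneg (by linarith [hβle1 x])]
        calc (1 - β x) * ‖F x - σm x‖ ≤ 1 * (1/4) :=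
              mul_le_mul (by linarith [hβnonneg x]) (htrans x hx) (norm_nonneg _) one_pos.le
          _ = 1/4 := one_mul _
      have h2 : ‖σm x‖ ≤ ‖G x‖ + ‖(1 - β x) • (F x - σm x)‖ := by
        calc ‖σm x‖ = ‖G x - (1 - β x) • (F x - σm x)‖ := by rw [hid]; congr 1; abel
          _ ≤ ‖G x‖ + ‖(1 - β x) • (F x - σm x)‖ := norm_sub_le _ _
      rw [hσnorm x] at h2
      linarith
    · have hβx : β x = 1 := le_antisymm (hβle1 x) hx
      have h1 : G x = σm x := by
        rw [hGdef]
        dsimp only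
        simp only [hβx]
        rw [sub_self, zero_smul, one_smul, zero_add]
      rw [h1, hσnorm x]
      norm_num
  have hGlip : ∀ x y, ‖G x - G y‖ ≤ (P + Kc*((n:ℝ)+3)) * (lam * dist x y) := by
    intro x y
    have hd0 : 0 ≤ dist x y := dist_nonneg
    have hid : G x - G y = (1 - β x) • (F x - F y) + β x • (σm x - σm y)
        + (β y - β x) • (F y - σm y) := by
      rw [hGdef]; dsimp only; module
    have hFσ : ‖F y - σm y‖ ≤ (n:ℝ)+3 := by
      calc ‖F y - σm y‖ ≤ ‖F y‖ + ‖σm y‖ := norm_sub_le _ _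
        _ ≤ ((n:ℝ)+2) + 1 := add_le_add (hFnormle y) (le_of_eq (hσnorm y))
        _ = (n:ℝ)+3 := by ring
    have hterm1 : ‖(1 - β x) • (F x - F y)‖ ≤ ((n:ℝ)+2) * (lam * dist x y) := by
      rw [norm_smul, Real.norm_eq_abs, abs_of_nonneg (by linarith [hβle1 x])]
      calc (1 - β x) * ‖F x - F y‖ ≤ 1 * (((n:ℝ)+2) * (lam * dist x y)) :=
            mul_le_mul (by linarith [hβnonneg x]) (hFlip x y) (norm_nonneg _) one_pos.le
        _ = ((n:ℝ)+2) * (lam * dist x y) := one_mul _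
    have hterm2 : ‖β x • (σm x - σm y)‖ ≤ Cσ * (lam * dist x y) := by
      rw [norm_smul, Real.norm_eq_abs, abs_of_nonneg (hβnonneg x)]
      calc β x * ‖σm x - σm y‖ ≤ 1 * (Cσ * (lam * dist x y)) :=
            mul_le_mul (hβle1 x) (hσlip x y) (norm_nonneg _) one_pos.le
        _ = Cσ * (lam * dist x y) := one_mul _
    have hterm3 : ‖(β y - β x) • (F y - σm y)‖ ≤ (Kc * lam * dist x y) * ((n:ℝ)+3) := by
      rw [norm_smul, Real.norm_eq_abs]
      have hb : |β y - β x| ≤ Kc * lam * dist x y := by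
        rw [abs_sub_comm]; exact hβlip x y
      exact mul_le_mul hb hFσ (norm_nonneg _) (by positivity)
    calc ‖G x - G y‖
        = ‖(1 - β x) • (F x - F y) + β x • (σm x - σm y) + (β y - β x) • (F y - σm y)‖ := by
          rw [hid]
      _ ≤ ‖(1 - β x) • (F x - F y) + β x • (σm x - σm y)‖ + ‖(β y - β x) • (F y - σm y)‖ :=
          norm_add_le _ _
      _ ≤ ‖(1 - β x) • (F x - F y)‖ + ‖β x • (σm x - σm y)‖ + ‖(β y - β x) • (F y - σm y)‖ := by
          linarith [norm_add_le ((1 - β x) • (F x - F y)) (β x • (σm x - σm y))]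
      _ ≤ ((n:ℝ)+2) * (lam * dist x y) + Cσ * (lam * dist x y) + (Kc * lam * dist x y) * ((n:ℝ)+3) := by
          linarith
      _ = (P + Kc*((n:ℝ)+3)) * (lam * dist x y) := by rw [hPdef]; ring
  -- the final map
  have hmem : ∀ x, ‖G x‖⁻¹ • G x ∈ Metric.sphere (0 : EuclideanSpace ℝ (Fin (n+2))) 1 := by
    intro x
    have hpos : 0 < ‖G x‖ := lt_of_lt_of_le (by norm_num) (hGlow x)
    rw [mem_sphere_zero_iff_norm, norm_smul, Real.norm_eq_abs,
      abs_of_pos (inv_pos.mpr hpos), inv_mul_cancel₀ hpos.ne']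
  refine ⟨fun x => ⟨‖G x‖⁻¹ • G x, hmem x⟩, ?_, ?_⟩
  · intro a
    apply Subtype.ext
    show ‖G ↑a‖⁻¹ • G ↑a = (f a : EuclideanSpace ℝ (Fin (n+2)))
    have h1 : G ↑a = (f a : EuclideanSpace ℝ (Fin (n+2))) := by
      rw [hGa a.1 a.2, hFa a.1 a.2]
    rw [h1, hfnorm a, inv_one, one_smul]
  · intro x y
    rw [Subtype.dist_eq, dist_eq_norm]
    have hd0 : 0 ≤ dist x y := dist_nonneg
    calc ‖(‖G x‖⁻¹ • G x : EuclideanSpace ℝ (Fin (n+2))) - ‖G y‖⁻¹ • G y‖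
        ≤ (2/(1/2)) * ‖G x - G y‖ :=
          normalize_lipschitz (1/2) (by norm_num) (G x) (G y) (hGlow x) (hGlow y)
      _ = 4 * ‖G x - G y‖ := by norm_num
      _ ≤ 4 * ((P + Kc*((n:ℝ)+3)) * (lam * dist x y)) := by
          have := hGlip x y
          linarith
      _ = C * lam * dist x y := by rw [hCdef]; ring
end

section
/- Let X be a metric space of finite asymptotic dimension with the Higson property (i.e. there is an integer N ≥ 0 such that the asymptotic dimension of X with the Higson property is at most N). Then for every integer n ≥ 0 the following are equivalent: (a) S^n is a large scale Lipschitz extensor of X; (b) the asymptotic dimension of X with the Higson property is at most n. -/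
set_option maxHeartbeats 1000000


/-- The asymptotic dimension of `X` with the Higson property is at most `n`: there exist
`C > 0` and `M > 0` such that for every `r > M` there is a cover of `X` splitting into `n+1`
`r`-disjoint families with all members of diameter at most `C·r`. -/
def HigsonAsdimLE (X : Type*) [MetricSpace X] (n : ℕ) : Prop :=
  ∃ C : ℝ, 0 < C ∧ ∃ M : ℝ, 0 < M ∧ ∀ r : ℝ, M < r →
    ∃ U : Fin (n + 1) → Set (Set X),
      (∀ x : X, ∃ i, ∃ V ∈ U i, x ∈ V) ∧
      (∀ i, ∀ V ∈ U i, ∀ W ∈ U i, V ≠ W → ∀ x ∈ V, ∀ y ∈ W, r < dist x y) ∧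
      (∀ i, ∀ V ∈ U i, ∀ x ∈ V, ∀ y ∈ V, dist x y ≤ C * r)


open Metric Set Finset

namespace SphereHigson


noncomputable def clamp (t : ℝ) : ℝ := max (-1) (min 1 t)

lemma clamp_le_one (t : ℝ) : clamp t ≤ 1 := by
  unfold clamp
  rcases le_total 1 t with h | h <;> simp [min_def, h] <;> first | rfl | linarith

lemma neg_one_le_clamp (t : ℝ) : -1 ≤ clamp t := le_max_left _ _

lemma abs_clamp_le_one (t : ℝ) : |clamp t| ≤ 1 :=
  abs_le.2 ⟨neg_one_le_clamp t, clamp_le_one t⟩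

lemma clamp_eq_self {t : ℝ} (h1 : -1 ≤ t) (h2 : t ≤ 1) : clamp t = t := by
  unfold clamp
  rw [min_eq_right h2, max_eq_right h1]

lemma clamp_eq_neg_one {t : ℝ} (h : t ≤ -1) : clamp t = -1 := by
  unfold clamp
  rw [min_eq_right (by linarith : t ≤ 1), max_eq_left h]

lemma abs_clamp_sub_clamp_le (a b : ℝ) : |clamp a - clamp b| ≤ |a - b| := by
  unfold clamp
  rcases le_total a b with hab | hab
  · rw [abs_of_nonpos (by
      have : min 1 a ≤ min 1 b := min_le_min le_rfl hab
      have := max_le_max (le_refl (-1 : ℝ)) this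
      linarith), abs_of_nonpos (by linarith)]
    simp only [neg_sub]
    rcases le_total a 1 with h1 | h1 <;> rcases le_total b 1 with h2 | h2 <;>
      simp [min_def, h1, h2, max_def] <;> first | linarith | (split_ifs <;> linarith)
  · rw [abs_of_nonneg (by
      have : min 1 b ≤ min 1 a := min_le_min le_rfl hab
      have := max_le_max (le_refl (-1 : ℝ)) this
      linarith), abs_of_nonneg (by linarith)]
    rcases le_total a 1 with h1 | h1 <;> rcases le_total b 1 with h2 | h2 <;>
      simp [min_def, h1, h2, max_def] <;> first | linarith | (split_ifs <;> linarith)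



variable {m : ℕ}

lemma abs_coord_le_norm (v : EuclideanSpace ℝ (Fin m)) (i : Fin m) : |v i| ≤ ‖v‖ := by
  rw [EuclideanSpace.norm_eq]
  have h1 : |v i| = Real.sqrt (‖v i‖ ^ 2) := by
    rw [Real.sqrt_sq_eq_abs]; simp [abs_abs, Real.norm_eq_abs]
  rw [h1]
  apply Real.sqrt_le_sqrt
  exact Finset.single_le_sum (f := fun j => ‖v j‖ ^ 2) (fun j _ => by positivity) (mem_univ i)

lemma norm_le_sqrt_mul (v : EuclideanSpace ℝ (Fin m)) {b : ℝ} (hb : 0 ≤ b)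
    (h : ∀ i, |v i| ≤ b) : ‖v‖ ≤ Real.sqrt m * b := by
  rw [EuclideanSpace.norm_eq]
  have h1 : ∑ i : Fin m, ‖v i‖ ^ 2 ≤ (m : ℝ) * b ^ 2 := by
    calc ∑ i : Fin m, ‖v i‖ ^ 2 ≤ ∑ _i : Fin m, b ^ 2 := by
          apply Finset.sum_le_sum
          intro i _
          have := h i
          rw [Real.norm_eq_abs]
          nlinarith [abs_nonneg (v i)]
      _ = (m : ℝ) * b ^ 2 := by simp [Finset.sum_const, Finset.card_univ, nsmul_eq_mul]
  calc Real.sqrt (∑ i : Fin m, ‖v i‖ ^ 2) ≤ Real.sqrt ((m : ℝ) * b ^ 2) := Real.sqrt_le_sqrt h1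
    _ = Real.sqrt m * b := by
        rw [Real.sqrt_mul (by positivity), Real.sqrt_sq hb]

lemma abs_coord_sub_le_dist (v w : EuclideanSpace ℝ (Fin m)) (i : Fin m) :
    |v i - w i| ≤ dist v w := by
  have := abs_coord_le_norm (v - w) i
  rw [PiLp.sub_apply] at this
  rwa [show dist v w = ‖v - w‖ from dist_eq_norm v w]

lemma dist_le_sqrt_mul (v w : EuclideanSpace ℝ (Fin m)) {b : ℝ} (hb : 0 ≤ b)
    (h : ∀ i, |v i - w i| ≤ b) : dist v w ≤ Real.sqrt m * b := by
  rw [dist_eq_norm]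
  exact norm_le_sqrt_mul _ hb (fun i => by rw [PiLp.sub_apply]; exact h i)

lemma normalize_lipschitz {E : Type*} [NormedAddCommGroup E] [NormedSpace ℝ E]
    (u v : E) {δ : ℝ} (hδ : 0 < δ) (hu : δ ≤ ‖u‖) (hv : δ ≤ ‖v‖) :
    ‖‖u‖⁻¹ • u - ‖v‖⁻¹ • v‖ ≤ (2 / δ) * ‖u - v‖ := by
  have hu0 : (0:ℝ) < ‖u‖ := lt_of_lt_of_le hδ hu
  have hv0 : (0:ℝ) < ‖v‖ := lt_of_lt_of_le hδ hv
  have key : ‖u‖⁻¹ • u - ‖v‖⁻¹ • v = ‖u‖⁻¹ • (u - v) + (‖u‖⁻¹ - ‖v‖⁻¹) • v := by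
    rw [smul_sub, sub_smul]; abel
  rw [key]
  have h1 : ‖‖u‖⁻¹ • (u - v)‖ = ‖u‖⁻¹ * ‖u - v‖ := by
    rw [norm_smul, Real.norm_eq_abs, abs_of_pos (by positivity)]
  have h2 : ‖(‖u‖⁻¹ - ‖v‖⁻¹) • v‖ = |‖u‖⁻¹ - ‖v‖⁻¹| * ‖v‖ := by
    rw [norm_smul, Real.norm_eq_abs]
  have h3 : |‖u‖⁻¹ - ‖v‖⁻¹| * ‖v‖ ≤ ‖u - v‖ / δ := by
    have e : ‖u‖⁻¹ - ‖v‖⁻¹ = (‖v‖ - ‖u‖) / (‖u‖ * ‖v‖) := by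
      field_simp
    have e2 : |(‖v‖ - ‖u‖) / (‖u‖ * ‖v‖)| = |‖v‖ - ‖u‖| / (‖u‖ * ‖v‖) := by
      rw [abs_div, abs_of_pos (by positivity : (0:ℝ) < ‖u‖ * ‖v‖)]
    rw [e, e2, div_mul_eq_mul_div, div_le_div_iff₀ (by positivity) hδ]
    have h4 : |‖v‖ - ‖u‖| ≤ ‖u - v‖ := by
      rw [abs_sub_comm]
      exact abs_norm_sub_norm_le u v
    calc |‖v‖ - ‖u‖| * ‖v‖ * δ ≤ ‖u - v‖ * ‖v‖ * ‖u‖ := by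
          apply mul_le_mul _ hu (le_of_lt hδ) (by positivity)
          exact mul_le_mul_of_nonneg_right h4 (le_of_lt hv0)
      _ = ‖u - v‖ * (‖u‖ * ‖v‖) := by ring
  have h5 : ‖u‖⁻¹ * ‖u - v‖ ≤ ‖u - v‖ / δ := by
    rw [div_eq_inv_mul]
    apply mul_le_mul_of_nonneg_right _ (norm_nonneg _)
    exact inv_anti₀ hδ hu
  calc ‖‖u‖⁻¹ • (u - v) + (‖u‖⁻¹ - ‖v‖⁻¹) • v‖
      ≤ ‖‖u‖⁻¹ • (u - v)‖ + ‖(‖u‖⁻¹ - ‖v‖⁻¹) • v‖ := norm_add_le _ _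
    _ ≤ ‖u - v‖ / δ + ‖u - v‖ / δ := by rw [h1, h2]; exact add_le_add h5 h3
    _ = (2 / δ) * ‖u - v‖ := by ring



variable {m : ℕ}

noncomputable def nm (v : EuclideanSpace ℝ (Fin (m + 1))) : ℝ :=
  Finset.univ.sup' (by exact ⟨0, Finset.mem_univ 0⟩) (fun i => |v i|)

lemma abs_coord_le_nm (v : EuclideanSpace ℝ (Fin (m + 1))) (i : Fin (m + 1)) :
    |v i| ≤ nm v := Finset.le_sup' (fun j => |v j|) (Finset.mem_univ i)

lemma nm_le_of (v : EuclideanSpace ℝ (Fin (m + 1))) {b : ℝ} (h : ∀ i, |v i| ≤ b) :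
    nm v ≤ b := Finset.sup'_le _ _ (fun i _ => h i)

lemma exists_nm_eq (v : EuclideanSpace ℝ (Fin (m + 1))) : ∃ i, nm v = |v i| := by
  obtain ⟨i, _, h⟩ := Finset.exists_mem_eq_sup' (s := (Finset.univ : Finset (Fin (m+1))))
    (by exact ⟨0, Finset.mem_univ 0⟩) (fun i => |v i|)
  exact ⟨i, h⟩

lemma nm_nonneg (v : EuclideanSpace ℝ (Fin (m + 1))) : 0 ≤ nm v :=
  le_trans (abs_nonneg _) (abs_coord_le_nm v 0)

lemma nm_le_norm (v : EuclideanSpace ℝ (Fin (m + 1))) : nm v ≤ ‖v‖ := by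
  obtain ⟨i, h⟩ := exists_nm_eq v
  rw [h]
  exact abs_coord_le_norm v i

lemma norm_le_sqrt_nm (v : EuclideanSpace ℝ (Fin (m + 1))) :
    ‖v‖ ≤ Real.sqrt (m + 1) * nm v := by
  have := norm_le_sqrt_mul v (nm_nonneg v) (abs_coord_le_nm v)
  simpa using this

lemma abs_nm_sub_nm_le (u v : EuclideanSpace ℝ (Fin (m + 1))) :
    |nm u - nm v| ≤ dist u v := by
  have key : ∀ a b : EuclideanSpace ℝ (Fin (m + 1)), nm a ≤ nm b + dist a b := by
    intro a b
    apply nm_le_of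
    intro i
    calc |a i| ≤ |b i| + |a i - b i| := by
          have := abs_add_le (b i) (a i - b i); simpa [add_sub_cancel] using this
      _ ≤ nm b + dist a b := add_le_add (abs_coord_le_nm b i) (abs_coord_sub_le_dist a b i)
  rw [abs_sub_le_iff]
  constructor
  · linarith [key u v]
  · linarith [key v u, dist_comm u v]

lemma nm_smul (v : EuclideanSpace ℝ (Fin (m + 1))) {t : ℝ} (ht : 0 ≤ t) :
    nm (t • v) = t * nm v := by
  have hc : ∀ i, |(t • v) i| = t * |v i| := by
    intro i
    rw [PiLp.smul_apply, smul_eq_mul, abs_mul, abs_of_nonneg ht]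
  apply le_antisymm
  · apply nm_le_of
    intro i
    rw [hc i]
    exact mul_le_mul_of_nonneg_left (abs_coord_le_nm v i) ht
  · obtain ⟨i, h⟩ := exists_nm_eq v
    rw [h, ← hc i]
    exact abs_coord_le_nm (t • v) i

/-- McShane extension with clamping to `[-1,1]`. -/
lemma extend_clamp {X : Type*} [MetricSpace X] (A : Set X) (f : X → ℝ) {L : ℝ} (hL : 0 ≤ L)
    (hf : ∀ x ∈ A, ∀ y ∈ A, |f x - f y| ≤ L * dist x y) (hbd : ∀ x ∈ A, |f x| ≤ 1) :
    ∃ F : X → ℝ, (∀ x ∈ A, F x = f x) ∧ (∀ x y, |F x - F y| ≤ L * dist x y) ∧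
      (∀ x, |F x| ≤ 1) := by
  have hlip : LipschitzOnWith L.toNNReal f A := by
    rw [lipschitzOnWith_iff_dist_le_mul]
    intro x hx y hy
    rw [Real.dist_eq, Real.coe_toNNReal L hL]
    exact hf x hx y hy
  obtain ⟨g, hg, heq⟩ := hlip.extend_real
  refine ⟨fun x => clamp (g x), ?_, ?_, fun x => abs_clamp_le_one _⟩
  · intro x hx
    show clamp (g x) = f x
    rw [← heq hx]
    have h1 := hbd x hx
    exact clamp_eq_self (by rw [abs_le] at h1; exact h1.1) (by rw [abs_le] at h1; exact h1.2)
  · intro x y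
    calc |clamp (g x) - clamp (g y)| ≤ |g x - g y| := abs_clamp_sub_clamp_le _ _
      _ ≤ L * dist x y := by
          have := hg.dist_le_mul x y
          rwa [Real.dist_eq, Real.coe_toNNReal L hL] at this

lemma le_infDist' {X : Type*} [MetricSpace X] {A : Set X} (hA : A.Nonempty) {x : X} {b : ℝ}
    (h : ∀ a ∈ A, b ≤ dist x a) : b ≤ infDist x A := by
  by_contra hc
  push_neg at hc
  obtain ⟨y, hy, hlt⟩ := (infDist_lt_iff hA).1 hc
  exact absurd hlt (not_lt.2 (h y hy))

lemma abs_infDist_sub_le {X : Type*} [MetricSpace X] (A : Set X) (x y : X) :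
    |infDist x A - infDist y A| ≤ dist x y := by
  rw [abs_sub_le_iff]
  constructor
  · linarith [infDist_le_infDist_add_dist (s := A) (x := x) (y := y)]
  · linarith [infDist_le_infDist_add_dist (s := A) (x := y) (y := x), dist_comm x y]


end SphereHigson

theorem higson_to_extensor {X : Type*} [MetricSpace X] (n : ℕ)
    (h : HigsonAsdimLE X n) :
    LargeScaleLipschitzExtensorOf X (Metric.sphere (0 : EuclideanSpace ℝ (Fin (n + 1))) 1) := by
  classical
  obtain ⟨C₀, hC₀, M₀, hM₀, hcov⟩ := h
  set sq : ℝ := Real.sqrt (n + 1) with hsqdef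
  have hsq1 : 1 ≤ sq := by
    nlinarith [Real.sq_sqrt (show (0:ℝ) ≤ (n:ℝ) + 1 by positivity),
      Real.sqrt_nonneg ((n:ℝ) + 1)]
  have hsq0 : 0 < sq := by linarith
  set c : ℝ := 1 / (4 * sq) with hcdef
  have hc : 0 < c := by positivity
  have hsqc : sq * c = 1 / 4 := by
    rw [hcdef]
    field_simp
  have hc1 : c ≤ 1 / 4 := by nlinarith
  refine ⟨(4 / c) * sq * (2 + 4 * C₀), by positivity, c / (2 * C₀ * M₀), by positivity,
    fun A hA lam hlam hlamM f hf => ?_⟩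
  set r : ℝ := c / (2 * C₀ * lam) with hrdef
  have hrpos : 0 < r := by positivity
  have hr : M₀ < r := by
    have h' := (lt_div_iff₀ (by positivity : (0:ℝ) < 2 * C₀ * M₀)).1 hlamM
    rw [hrdef, lt_div_iff₀ (by positivity)]
    nlinarith
  obtain ⟨U, hUcov, hUdisj, hUdiam⟩ := hcov r hr
  have hrc : c / r = 2 * C₀ * lam := by
    rw [hrdef]
    field_simp
  -- coordinates of f
  set fc : Fin (n + 1) → X → ℝ := fun i x =>
    if h : x ∈ A then (↑(f ⟨x, h⟩) : EuclideanSpace ℝ (Fin (n + 1))) i else 0 with hfcdef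
  have hfc_lip : ∀ i : Fin (n + 1), ∀ x ∈ A, ∀ y ∈ A,
      |fc i x - fc i y| ≤ lam * dist x y := by
    intro i x hx y hy
    rw [hfcdef]
    simp only [dif_pos hx, dif_pos hy]
    calc |(↑(f ⟨x, hx⟩) : EuclideanSpace ℝ (Fin (n + 1))) i -
          (↑(f ⟨y, hy⟩) : EuclideanSpace ℝ (Fin (n + 1))) i|
        ≤ dist (↑(f ⟨x, hx⟩) : EuclideanSpace ℝ (Fin (n + 1))) ↑(f ⟨y, hy⟩) :=
          SphereHigson.abs_coord_sub_le_dist _ _ i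
      _ = dist (f ⟨x, hx⟩) (f ⟨y, hy⟩) := (Subtype.dist_eq _ _).symm
      _ ≤ lam * dist x y := hf ⟨x, hx⟩ ⟨y, hy⟩
  have hfc_bd : ∀ i : Fin (n + 1), ∀ x ∈ A, |fc i x| ≤ 1 := by
    intro i x hx
    rw [hfcdef]
    simp only [dif_pos hx]
    calc |(↑(f ⟨x, hx⟩) : EuclideanSpace ℝ (Fin (n + 1))) i|
        ≤ ‖(↑(f ⟨x, hx⟩) : EuclideanSpace ℝ (Fin (n + 1)))‖ :=
          SphereHigson.abs_coord_le_norm _ i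
      _ = 1 := mem_sphere_zero_iff_norm.1 (f ⟨x, hx⟩).2
  have hFex : ∀ i : Fin (n + 1), ∃ F : X → ℝ, (∀ x ∈ A, F x = fc i x) ∧
      (∀ x y, |F x - F y| ≤ lam * dist x y) ∧ (∀ x, |F x| ≤ 1) :=
    fun i => SphereHigson.extend_clamp A (fc i) hlam.le (hfc_lip i) (hfc_bd i)
  choose F hFeq hFlip hFbd using hFex
  -- base points and signs
  set aV : Set X → X := fun V => if h : V.Nonempty then h.some else hA.some with haVdef
  have haV : ∀ V : Set X, V.Nonempty → aV V ∈ V := by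
    intro V hV
    rw [haVdef]
    simp only [dif_pos hV]
    exact hV.some_mem
  set eps : Fin (n + 1) → Set X → ℝ :=
    fun i V => if 0 ≤ F i (aV V) then 1 else -1 with hepsdef
  have heps_cases : ∀ i V, eps i V = 1 ∨ eps i V = -1 := by
    intro i V
    rw [hepsdef]
    dsimp only
    split_ifs <;> simp
  have heps_abs : ∀ i V, |eps i V| = 1 := by
    intro i V
    rcases heps_cases i V with h' | h' <;> rw [h'] <;> norm_num
  have heps_mul : ∀ i V, 0 ≤ F i (aV V) * eps i V := by
    intro i V
    rw [hepsdef]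
    dsimp only
    split_ifs with h'
    · nlinarith
    · nlinarith [lt_of_not_ge h']
  -- the sign fields
  set Dset : Fin (n + 1) → Set X := fun i => {x | ∃ V ∈ U i, x ∈ V} with hDdef
  set eraw : Fin (n + 1) → X → ℝ := fun i x =>
    if h : ∃ V ∈ U i, x ∈ V then eps i h.choose else 0 with herawdef
  have heraw_piece : ∀ (i : Fin (n+1)) (x : X) (h : ∃ V ∈ U i, x ∈ V), ∀ V ∈ U i, x ∈ V →
      eraw i x = eps i V := by
    intro i x hex V hV hxV
    obtain ⟨h1, h2⟩ := hex.choose_spec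
    by_cases hVeq : hex.choose = V
    · rw [herawdef]
      simp only [dif_pos hex]
      rw [hVeq]
    · exfalso
      have := hUdisj i hex.choose h1 V hV hVeq x h2 x hxV
      simp at this
      linarith
  have heraw_lip : ∀ i : Fin (n + 1), ∀ x ∈ Dset i, ∀ y ∈ Dset i,
      |eraw i x - eraw i y| ≤ (2 / r) * dist x y := by
    intro i x hx y hy
    obtain ⟨Vx, hVx, hxVx⟩ := hx
    obtain ⟨Vy, hVy, hyVy⟩ := hy
    rw [heraw_piece i x ⟨Vx, hVx, hxVx⟩ Vx hVx hxVx,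
      heraw_piece i y ⟨Vy, hVy, hyVy⟩ Vy hVy hyVy]
    by_cases hVeq : Vx = Vy
    · rw [hVeq]
      simp only [sub_self, abs_zero]
      positivity
    · have hd := hUdisj i Vx hVx Vy hVy hVeq x hxVx y hyVy
      calc |eps i Vx - eps i Vy| ≤ |eps i Vx| + |eps i Vy| := abs_sub _ _
        _ = 2 := by rw [heps_abs, heps_abs]; norm_num
        _ ≤ (2 / r) * dist x y := by
            rw [div_mul_eq_mul_div, le_div_iff₀ hrpos]
            nlinarith
  have heraw_bd : ∀ i : Fin (n + 1), ∀ x ∈ Dset i, |eraw i x| ≤ 1 := by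
    intro i x hx
    obtain ⟨Vx, hVx, hxVx⟩ := hx
    rw [heraw_piece i x ⟨Vx, hVx, hxVx⟩ Vx hVx hxVx, heps_abs]
  have hEex : ∀ i : Fin (n + 1), ∃ E : X → ℝ, (∀ x ∈ Dset i, E x = eraw i x) ∧
      (∀ x y, |E x - E y| ≤ (2 / r) * dist x y) ∧ (∀ x, |E x| ≤ 1) :=
    fun i => SphereHigson.extend_clamp (Dset i) (eraw i)
      (div_nonneg (by norm_num) hrpos.le) (heraw_lip i) (heraw_bd i)
  choose E hEeq hElip hEbd using hEex
  -- the ramp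
  set sfun : X → ℝ := fun x => min c (lam * Metric.infDist x A) with hsdef
  have hs_nonneg : ∀ x, 0 ≤ sfun x := by
    intro x
    rw [hsdef]
    exact le_min hc.le (mul_nonneg hlam.le Metric.infDist_nonneg)
  have hs_le_c : ∀ x, sfun x ≤ c := fun x => min_le_left _ _
  have hs_le : ∀ x, sfun x ≤ lam * Metric.infDist x A := fun x => min_le_right _ _
  have hs_lip : ∀ x y, |sfun x - sfun y| ≤ lam * dist x y := by
    intro x y
    have h1 := SphereHigson.abs_infDist_sub_le A x y
    rw [hsdef]
    simp only
    rw [abs_le] at h1 ⊢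
    constructor
    · rcases le_total c (lam * Metric.infDist y A) with h' | h' <;>
        rcases le_total c (lam * Metric.infDist x A) with h'' | h'' <;>
        simp only [min_eq_left, min_eq_right, h', h'', min_def] <;> nlinarith
    · rcases le_total c (lam * Metric.infDist y A) with h' | h' <;>
        rcases le_total c (lam * Metric.infDist x A) with h'' | h'' <;>
        simp only [min_eq_left, min_eq_right, h', h'', min_def] <;> nlinarith
  -- the vector field G
  set Gc : Fin (n + 1) → X → ℝ := fun i x => F i x + sfun x * E i x with hGcdef
  set Gv : X → EuclideanSpace ℝ (Fin (n + 1)) :=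
    fun x => (WithLp.equiv 2 _).symm (fun i => Gc i x) with hGvdef
  have hGvcoord : ∀ x i, Gv x i = Gc i x := fun x i => rfl
  have hGc_lip : ∀ i x y, |Gc i x - Gc i y| ≤ (2 + 4 * C₀) * lam * dist x y := by
    intro i x y
    have h1 := hFlip i x y
    have h2 := hElip i x y
    have h3 := hs_lip x y
    have h4 := hEbd i y
    have h5 := hs_le_c x
    have h6 := hs_nonneg x
    have hcr : c * (2 / r) = 4 * C₀ * lam := by
      have e : c * (2 / r) = 2 * (c / r) := by ring
      rw [e, hrc]
      ring
    have key : Gc i x - Gc i y =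
        (F i x - F i y) + (sfun x * (E i x - E i y) + E i y * (sfun x - sfun y)) := by
      rw [hGcdef]
      ring
    have b2 : |sfun x * (E i x - E i y)| ≤ 4 * C₀ * lam * dist x y := by
      rw [abs_mul, abs_of_nonneg h6]
      calc sfun x * |E i x - E i y| ≤ c * (2 / r * dist x y) :=
            mul_le_mul h5 h2 (abs_nonneg _) hc.le
        _ = 4 * C₀ * lam * dist x y := by rw [← mul_assoc, hcr]
    have b3 : |E i y * (sfun x - sfun y)| ≤ lam * dist x y := by
      rw [abs_mul]
      calc |E i y| * |sfun x - sfun y| ≤ 1 * (lam * dist x y) :=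
            mul_le_mul h4 h3 (abs_nonneg _) zero_le_one
        _ = lam * dist x y := one_mul _
    calc |Gc i x - Gc i y|
        = |(F i x - F i y) + (sfun x * (E i x - E i y) + E i y * (sfun x - sfun y))| := by
          rw [key]
      _ ≤ |F i x - F i y| + |sfun x * (E i x - E i y) + E i y * (sfun x - sfun y)| :=
          abs_add_le _ _
      _ ≤ |F i x - F i y| + (|sfun x * (E i x - E i y)| + |E i y * (sfun x - sfun y)|) := by
          linarith [abs_add_le (sfun x * (E i x - E i y)) (E i y * (sfun x - sfun y))]
      _ ≤ (2 + 4 * C₀) * lam * dist x y := by nlinarith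
  have hsqnat : Real.sqrt ((n : ℝ) + 1) = sq := by
    rw [hsqdef]
  have hGv_lip : ∀ x y, dist (Gv x) (Gv y) ≤ sq * ((2 + 4 * C₀) * lam * dist x y) := by
    intro x y
    have := SphereHigson.dist_le_sqrt_mul (Gv x) (Gv y)
      (b := (2 + 4 * C₀) * lam * dist x y) (by positivity)
      (fun i => by rw [hGvcoord, hGvcoord]; exact hGc_lip i x y)
    calc dist (Gv x) (Gv y) ≤ Real.sqrt (n + 1) * ((2 + 4 * C₀) * lam * dist x y) := by
          convert this using 3
          push_cast
          try ring
      _ = sq * ((2 + 4 * C₀) * lam * dist x y) := by rw [← hsqnat]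
  -- the McShane part as a vector
  set Fv : X → EuclideanSpace ℝ (Fin (n + 1)) :=
    fun x => (WithLp.equiv 2 _).symm (fun i => F i x) with hFvdef
  have hFvcoord : ∀ x i, Fv x i = F i x := fun x i => rfl
  have hFv_low : ∀ x, 1 - sq * (lam * Metric.infDist x A) ≤ ‖Fv x‖ := by
    intro x
    have hper : ∀ a ∈ A, 1 - sq * (lam * dist x a) ≤ ‖Fv x‖ := by
      intro a ha
      set w : EuclideanSpace ℝ (Fin (n + 1)) := ↑(f ⟨a, ha⟩) with hwdef
      have hwn : ‖w‖ = 1 := mem_sphere_zero_iff_norm.1 (f ⟨a, ha⟩).2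
      have hco : ∀ i, |(Fv x - w) i| ≤ lam * dist x a := by
        intro i
        rw [PiLp.sub_apply, hFvcoord]
        have hwi : w i = fc i a := by
          rw [hfcdef]
          simp only [dif_pos ha]
          rfl
        rw [hwi, ← hFeq i a ha]
        exact hFlip i x a
      have hnb : ‖Fv x - w‖ ≤ sq * (lam * dist x a) := by
        have := SphereHigson.norm_le_sqrt_mul (Fv x - w) (b := lam * dist x a)
          (by positivity) hco
        calc ‖Fv x - w‖ ≤ Real.sqrt (n + 1) * (lam * dist x a) := by
              convert this using 3
              push_cast
              try ring
          _ = sq * (lam * dist x a) := by rw [← hsqnat]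
      have habs := abs_norm_sub_norm_le (Fv x) w
      rw [abs_le] at habs
      linarith [habs.1]
    by_cases htriv : 1 - ‖Fv x‖ ≤ 0
    · have h0 := Metric.infDist_nonneg (s := A) (x := x)
      nlinarith [mul_nonneg (mul_nonneg hsq0.le hlam.le) h0]
    · push_neg at htriv
      have h3 : (1 - ‖Fv x‖) / (sq * lam) ≤ Metric.infDist x A := by
        apply SphereHigson.le_infDist' hA
        intro a ha
        rw [div_le_iff₀ (by positivity)]
        have := hper a ha
        nlinarith
      have h4 : 1 - ‖Fv x‖ ≤ sq * lam * Metric.infDist x A := by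
        calc 1 - ‖Fv x‖ = sq * lam * ((1 - ‖Fv x‖) / (sq * lam)) := by field_simp
          _ ≤ sq * lam * Metric.infDist x A := by
              apply mul_le_mul_of_nonneg_left h3 (by positivity)
      nlinarith
  -- lower bound on ‖Gv x‖
  have hGlow : ∀ x, c / 2 ≤ ‖Gv x‖ := by
    intro x
    have hGF : ‖Gv x - Fv x‖ ≤ sq * sfun x := by
      have hco : ∀ i, |(Gv x - Fv x) i| ≤ sfun x := by
        intro i
        rw [PiLp.sub_apply, hGvcoord, hFvcoord]
        have : F i x + sfun x * E i x - F i x = sfun x * E i x := by ring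
        rw [hGcdef]
        simp only
        rw [this, abs_mul, abs_of_nonneg (hs_nonneg x)]
        calc sfun x * |E i x| ≤ sfun x * 1 :=
              mul_le_mul_of_nonneg_left (hEbd i x) (hs_nonneg x)
          _ = sfun x := mul_one _
      have := SphereHigson.norm_le_sqrt_mul (Gv x - Fv x) (hs_nonneg x) hco
      calc ‖Gv x - Fv x‖ ≤ Real.sqrt (n + 1) * sfun x := by
            convert this using 3
            push_cast
            try ring
        _ = sq * sfun x := by rw [← hsqnat]
    rcases le_or_gt (lam * Metric.infDist x A) c with hD | hD
    · -- near A
      have h1 := hFv_low x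
      have habs := abs_norm_sub_norm_le (Gv x) (Fv x)
      rw [abs_le] at habs
      have h2 : sfun x ≤ lam * Metric.infDist x A := hs_le x
      have h5 : sq * sfun x ≤ sq * c := by nlinarith [hs_nonneg x]
      have h6 : sq * (lam * Metric.infDist x A) ≤ sq * c := by
        apply mul_le_mul_of_nonneg_left hD hsq0.le
      nlinarith [habs.1, habs.2, hs_nonneg x]
    · -- far from A
      have hsx : sfun x = c := by
        rw [hsdef]
        exact min_eq_left hD.le
      obtain ⟨i, V, hV, hxV⟩ := hUcov x
      have hxD : x ∈ Dset i := ⟨V, hV, hxV⟩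
      have hEx : E i x = eps i V := by
        rw [hEeq i x hxD, heraw_piece i x ⟨V, hV, hxV⟩ V hV hxV]
      have hVne : V.Nonempty := ⟨x, hxV⟩
      have haVV := haV V hVne
      have hdxa : dist x (aV V) ≤ C₀ * r := hUdiam i V hV x hxV (aV V) haVV
      have hlCr : lam * (C₀ * r) = c / 2 := by
        rw [hrdef]
        field_simp
      have hFa : |F i x - F i (aV V)| ≤ c / 2 := by
        calc |F i x - F i (aV V)| ≤ lam * dist x (aV V) := hFlip i x (aV V)
          _ ≤ lam * (C₀ * r) := by nlinarith
          _ = c / 2 := hlCr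
      have hε2 : eps i V * eps i V = 1 := by
        rcases heps_cases i V with h' | h' <;> rw [h'] <;> norm_num
      have hεabs := heps_abs i V
      have hmul := heps_mul i V
      have hstep : (F i x - F i (aV V)) * eps i V ≥ -(c / 2) := by
        have h7 : |(F i x - F i (aV V)) * eps i V| ≤ c / 2 := by
          rw [abs_mul, hεabs, mul_one]
          exact hFa
        rw [abs_le] at h7
        linarith [h7.1]
      have hkey : c / 2 ≤ Gc i x * eps i V := by
        have e1 : Gc i x * eps i V =
            F i (aV V) * eps i V + (F i x - F i (aV V)) * eps i V +
              sfun x * (E i x * eps i V) := by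
          rw [hGcdef]
          ring
        rw [e1, hEx, hε2, hsx]
        linarith
      have habs : c / 2 ≤ |Gc i x| := by
        calc c / 2 ≤ Gc i x * eps i V := hkey
          _ ≤ |Gc i x * eps i V| := le_abs_self _
          _ = |Gc i x| := by rw [abs_mul, hεabs, mul_one]
      calc c / 2 ≤ |Gc i x| := habs
        _ = |Gv x i| := by rw [hGvcoord]
        _ ≤ ‖Gv x‖ := SphereHigson.abs_coord_le_norm _ i
  have hGpos : ∀ x, 0 < ‖Gv x‖ := fun x => lt_of_lt_of_le (by positivity) (hGlow x)
  -- the extension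
  set g : X → ↥(Metric.sphere (0 : EuclideanSpace ℝ (Fin (n + 1))) 1) := fun x =>
    ⟨‖Gv x‖⁻¹ • Gv x, by
      rw [mem_sphere_zero_iff_norm, norm_smul, Real.norm_eq_abs,
        abs_of_pos (inv_pos.2 (hGpos x)), inv_mul_cancel₀ (hGpos x).ne']⟩ with hgdef
  refine ⟨g, ?_, ?_⟩
  · -- extension property
    intro a
    have haA : (a : X) ∈ A := a.2
    have hsz : sfun (a : X) = 0 := by
      rw [hsdef]
      simp only
      rw [Metric.infDist_zero_of_mem haA, mul_zero]
      exact min_eq_right hc.le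
    have hGva : Gv (a : X) = ↑(f a) := by
      apply PiLp.ext
      intro i
      rw [hGvcoord, hGcdef]
      simp only
      rw [hsz, zero_mul, add_zero, hFeq i (a : X) haA, hfcdef]
      simp only [dif_pos haA, Subtype.coe_eta]
    have hn1 : ‖Gv (a : X)‖ = 1 := by
      rw [hGva]
      exact mem_sphere_zero_iff_norm.1 (f a).2
    rw [hgdef]
    apply Subtype.ext
    simp only
    rw [hn1, hGva, inv_one, one_smul]
  · -- Lipschitz bound
    intro x y
    have hd : dist (g x) (g y) = ‖‖Gv x‖⁻¹ • Gv x - ‖Gv y‖⁻¹ • Gv y‖ := by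
      rw [hgdef, Subtype.dist_eq]
      simp only
      rw [dist_eq_norm]
    rw [hd]
    have hnl := SphereHigson.normalize_lipschitz (Gv x) (Gv y) (by positivity : (0:ℝ) < c / 2)
      (hGlow x) (hGlow y)
    have hnn : ‖Gv x - Gv y‖ = dist (Gv x) (Gv y) := (dist_eq_norm _ _).symm
    calc ‖‖Gv x‖⁻¹ • Gv x - ‖Gv y‖⁻¹ • Gv y‖
        ≤ 2 / (c / 2) * ‖Gv x - Gv y‖ := hnl
      _ = 4 / c * dist (Gv x) (Gv y) := by
          rw [hnn]
          congr 1
          field_simp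
          ring
      _ ≤ 4 / c * (sq * ((2 + 4 * C₀) * lam * dist x y)) := by
          apply mul_le_mul_of_nonneg_left (hGv_lip x y) (by positivity)
      _ = 4 / c * sq * (2 + 4 * C₀) * lam * dist x y := by ring

theorem higson_mono {X : Type*} [MetricSpace X] {a b : ℕ} (hab : a ≤ b)
    (h : HigsonAsdimLE X a) : HigsonAsdimLE X b := by
  classical
  obtain ⟨C, hC, M, hM, hcov⟩ := h
  refine ⟨C, hC, M, hM, fun r hr => ?_⟩
  obtain ⟨U, hUcov, hUdisj, hUdiam⟩ := hcov r hr
  refine ⟨fun j => if h : (j : ℕ) < a + 1 then U ⟨j, h⟩ else ∅, ?_, ?_, ?_⟩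
  · intro x
    obtain ⟨i, V, hV, hxV⟩ := hUcov x
    refine ⟨⟨(i : ℕ), by omega⟩, V, ?_, hxV⟩
    have hlt : ((⟨(i : ℕ), by omega⟩ : Fin (b + 1)) : ℕ) < a + 1 := i.2
    dsimp only
    rw [dif_pos hlt]
    have : (⟨((⟨(i : ℕ), by omega⟩ : Fin (b + 1)) : ℕ), hlt⟩ : Fin (a + 1)) = i := Fin.ext rfl
    rwa [this]
  · intro j V hV W hW hne
    dsimp only at hV hW
    by_cases hj : (j : ℕ) < a + 1
    · rw [dif_pos hj] at hV hW
      exact hUdisj ⟨j, hj⟩ V hV W hW hne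
    · rw [dif_neg hj] at hV
      exact absurd hV (Set.notMem_empty V)
  · intro j V hV
    dsimp only at hV
    by_cases hj : (j : ℕ) < a + 1
    · rw [dif_pos hj] at hV
      exact hUdiam ⟨j, hj⟩ V hV
    · rw [dif_neg hj] at hV
      exact absurd hV (Set.notMem_empty V)

theorem higson_decrement {X : Type*} [MetricSpace X] (n k : ℕ) (hnk : n ≤ k)
    (hext : LargeScaleLipschitzExtensorOf X
      (Metric.sphere (0 : EuclideanSpace ℝ (Fin (n + 1))) 1))
    (h : HigsonAsdimLE X (k + 1)) : HigsonAsdimLE X k := by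
  classical
  rcases isEmpty_or_nonempty X with hX | hX
  · refine ⟨1, one_pos, 1, one_pos, fun r hr => ⟨fun _ => ∅, ?_, ?_, ?_⟩⟩
    · intro x
      exact absurd (Nonempty.intro x) (not_nonempty_iff.2 hX)
    · intro i V hV
      exact absurd hV (Set.notMem_empty V)
    · intro i V hV
      exact absurd hV (Set.notMem_empty V)
  obtain ⟨Ce, hCe, Me, hMe, hextf⟩ := hext
  obtain ⟨C₀, hC₀, M₀, hM₀, hcov⟩ := h
  set sq : ℝ := Real.sqrt (n + 1) with hsqdef
  have hsq1 : 1 ≤ sq := by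
    nlinarith [Real.sq_sqrt (show (0:ℝ) ≤ (n:ℝ) + 1 by positivity),
      Real.sqrt_nonneg ((n:ℝ) + 1)]
  have hsq0 : 0 < sq := by linarith
  have hsqsq : sq * sq = (n : ℝ) + 1 := by
    rw [hsqdef]
    exact Real.mul_self_sqrt (by positivity)
  set κ : ℝ := 8 * ((n : ℝ) + 1) * Ce + 2 with hκdef
  have hκ2 : 2 ≤ κ := by
    rw [hκdef]
    nlinarith
  have hκ0 : 0 < κ := by linarith
  set K : ℝ := 2 * κ + 2 with hKdef
  have hK0 : 0 < K := by rw [hKdef]; linarith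
  set C₁ : ℝ := C₀ * K + 2 * κ with hC₁def
  have hC₁0 : 0 < C₁ := by rw [hC₁def]; positivity
  refine ⟨C₁, hC₁0, max (M₀ / K) (4 * sq / (κ * Me)) + 1, by positivity, fun r hr => ?_⟩
  have hrpos : 0 < r := by
    have h1 : (0:ℝ) ≤ max (M₀ / K) (4 * sq / (κ * Me)) :=
      le_trans (by positivity) (le_max_left _ _)
    linarith
  set s : ℝ := κ * r with hsdef
  have hspos : 0 < s := by rw [hsdef]; positivity
  set S : ℝ := K * r with hSdef
  have hSpos : 0 < S := by rw [hSdef]; positivity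
  have hSM₀ : M₀ < S := by
    have h1 : M₀ / K ≤ max (M₀ / K) (4 * sq / (κ * Me)) := le_max_left _ _
    have h2 : M₀ / K < r := by linarith
    rw [hSdef]
    calc M₀ = K * (M₀ / K) := by field_simp
      _ < K * r := by exact mul_lt_mul_of_pos_left h2 hK0
  obtain ⟨U, hUcov, hUdisj, hUdiam⟩ := hcov S hSM₀
  -- color unions
  set Dj : Fin (k + 1) → Set X := fun j => {x | ∃ V ∈ U j.castSucc, x ∈ V} with hDjdef
  -- clamp coordinates
  set clampH : Fin (k + 1) → X → ℝ := fun j x =>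
    if hne : (Dj j).Nonempty then SphereHigson.clamp (1 - 2 / s * Metric.infDist x (Dj j))
    else -1 with hclampdef
  have hclamp_bd : ∀ j x, |clampH j x| ≤ 1 := by
    intro j x
    rw [hclampdef]
    dsimp only
    split_ifs
    · exact SphereHigson.abs_clamp_le_one _
    · norm_num
  have hclamp_one : ∀ j x, x ∈ Dj j → clampH j x = 1 := by
    intro j x hx
    rw [hclampdef]
    dsimp only
    rw [dif_pos ⟨x, hx⟩, Metric.infDist_zero_of_mem hx, mul_zero, sub_zero]
    exact SphereHigson.clamp_eq_self (by norm_num) le_rfl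
  have hclamp_negone : ∀ j x, (∀ u ∈ Dj j, s ≤ dist x u) → clampH j x = -1 := by
    intro j x hx
    rw [hclampdef]
    dsimp only
    split_ifs with hne
    · have hinf : s ≤ Metric.infDist x (Dj j) := SphereHigson.le_infDist' hne hx
      apply SphereHigson.clamp_eq_neg_one
      have h2 : 2 / s * s ≤ 2 / s * Metric.infDist x (Dj j) := by
        apply mul_le_mul_of_nonneg_left hinf (by positivity)
      have h3 : 2 / s * s = 2 := by field_simp
      linarith
    · rfl
  have hclamp_lip : ∀ j x y, |clampH j x - clampH j y| ≤ 2 / s * dist x y := by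
    intro j x y
    rw [hclampdef]
    dsimp only
    split_ifs with hne
    · calc |SphereHigson.clamp (1 - 2 / s * Metric.infDist x (Dj j)) -
            SphereHigson.clamp (1 - 2 / s * Metric.infDist y (Dj j))|
          ≤ |(1 - 2 / s * Metric.infDist x (Dj j)) -
            (1 - 2 / s * Metric.infDist y (Dj j))| := SphereHigson.abs_clamp_sub_clamp_le _ _
        _ = |2 / s * (Metric.infDist y (Dj j) - Metric.infDist x (Dj j))| := by
            congr 1
            ring
        _ = 2 / s * |Metric.infDist y (Dj j) - Metric.infDist x (Dj j)| := by
            rw [abs_mul, abs_of_pos (show (0:ℝ) < 2 / s by positivity)]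
        _ ≤ 2 / s * dist x y := by
            have hh := SphereHigson.abs_infDist_sub_le (Dj j) y x
            rw [dist_comm y x] at hh
            exact mul_le_mul_of_nonneg_left hh (by positivity)
    · simp only [sub_self, abs_zero]
      positivity
  -- the sphere-backed map
  set emb : Fin (n + 1) → Fin (k + 1) := fun i => ⟨i, by omega⟩ with hembdef
  set φ : X → EuclideanSpace ℝ (Fin (n + 1)) :=
    fun x => (WithLp.equiv 2 _).symm (fun i => clampH (emb i) x) with hφdef
  have hφcoord : ∀ x i, φ x i = clampH (emb i) x := fun x i => rfl
  set A : Set X := {x | ∃ i : Fin (n + 1), |φ x i| = 1} with hAdef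
  have hAne : A.Nonempty := by
    by_cases hall : (Dj (emb 0)).Nonempty
    · obtain ⟨a, ha⟩ := hall
      exact ⟨a, 0, by rw [hφcoord, hclamp_one _ _ ha]; norm_num⟩
    · obtain ⟨x₀⟩ := hX
      refine ⟨x₀, 0, ?_⟩
      rw [hφcoord, hclampdef]
      dsimp only
      rw [dif_neg hall]
      norm_num
  have hφA : ∀ x ∈ A, 1 ≤ ‖φ x‖ := by
    intro x hx
    obtain ⟨i, hi⟩ := hx
    calc (1:ℝ) = |φ x i| := hi.symm
      _ ≤ ‖φ x‖ := SphereHigson.abs_coord_le_norm _ i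
  have hφpos : ∀ x ∈ A, 0 < ‖φ x‖ := fun x hx => lt_of_lt_of_le one_pos (hφA x hx)
  set f : A → ↥(Metric.sphere (0 : EuclideanSpace ℝ (Fin (n + 1))) 1) := fun a =>
    ⟨‖φ (a : X)‖⁻¹ • φ (a : X), by
      rw [mem_sphere_zero_iff_norm, norm_smul, Real.norm_eq_abs,
        abs_of_pos (inv_pos.2 (hφpos _ a.2)), inv_mul_cancel₀ (hφpos _ a.2).ne']⟩ with hfdef
  set lamf : ℝ := 4 * sq / s with hlamfdef
  have hlamf0 : 0 < lamf := by rw [hlamfdef]; positivity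
  have hlamfM : lamf < Me := by
    have h1 : 4 * sq / (κ * Me) ≤ max (M₀ / K) (4 * sq / (κ * Me)) := le_max_right _ _
    have h2 : 4 * sq / (κ * Me) < r := by linarith
    rw [hlamfdef, hsdef, div_lt_iff₀ (by positivity)]
    rw [div_lt_iff₀ (by positivity)] at h2
    nlinarith
  have hφlip : ∀ x y : X, dist (φ x) (φ y) ≤ sq * (2 / s * dist x y) := by
    intro x y
    have := SphereHigson.dist_le_sqrt_mul (φ x) (φ y) (b := 2 / s * dist x y)
      (by positivity) (fun i => by rw [hφcoord, hφcoord]; exact hclamp_lip (emb i) x y)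
    calc dist (φ x) (φ y) ≤ Real.sqrt (n + 1) * (2 / s * dist x y) := by
          convert this using 3
          push_cast
          try ring
      _ = sq * (2 / s * dist x y) := by rw [← hsqdef]
  have hflip : ∀ a b : A, dist (f a) (f b) ≤ lamf * dist (a : X) (b : X) := by
    intro a b
    rw [hfdef, Subtype.dist_eq]
    dsimp only
    rw [dist_eq_norm]
    calc ‖‖φ (a : X)‖⁻¹ • φ (a : X) - ‖φ (b : X)‖⁻¹ • φ (b : X)‖
        ≤ 2 / 1 * ‖φ (a : X) - φ (b : X)‖ :=
          SphereHigson.normalize_lipschitz _ _ one_pos (hφA _ a.2) (hφA _ b.2)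
      _ = 2 * dist (φ (a : X)) (φ (b : X)) := by rw [← dist_eq_norm]; norm_num
      _ ≤ 2 * (sq * (2 / s * dist (a : X) (b : X))) := by
          apply mul_le_mul_of_nonneg_left (hφlip _ _) (by norm_num)
      _ = lamf * dist (a : X) (b : X) := by
          rw [hlamfdef]
          field_simp
          ring
  obtain ⟨g, hgeq, hglip⟩ := hextf A hAne lamf hlamf0 hlamfM f hflip
  have hgnorm : ∀ x, ‖(↑(g x) : EuclideanSpace ℝ (Fin (n + 1)))‖ = 1 :=
    fun x => mem_sphere_zero_iff_norm.1 (g x).2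
  have hnm_low : ∀ x, 1 / sq ≤ SphereHigson.nm (↑(g x) : EuclideanSpace ℝ (Fin (n + 1))) := by
    intro x
    have h1 := SphereHigson.norm_le_sqrt_nm (↑(g x) : EuclideanSpace ℝ (Fin (n + 1)))
    rw [hgnorm x] at h1
    rw [div_le_iff₀ hsq0]
    have : Real.sqrt (↑n + 1) = sq := by rw [hsqdef]
    rw [this] at h1
    linarith [mul_comm sq (SphereHigson.nm (↑(g x) : EuclideanSpace ℝ (Fin (n + 1))))]
  have hnm_pos : ∀ x, 0 < SphereHigson.nm (↑(g x) : EuclideanSpace ℝ (Fin (n + 1))) :=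
    fun x => lt_of_lt_of_le (by positivity) (hnm_low x)
  -- the full coordinate system
  set H : Fin (k + 1) → X → ℝ := fun j x =>
    if hj : (j : ℕ) < n + 1 then
      (↑(g x) : EuclideanSpace ℝ (Fin (n + 1))) ⟨j, hj⟩ /
        SphereHigson.nm (↑(g x) : EuclideanSpace ℝ (Fin (n + 1)))
    else clampH j x with hHdef
  -- key: on A, g is the normalized φ, so sphere coordinates match clamp coordinates
  have hgA : ∀ (x : X) (hx : x ∈ A) (i : Fin (n + 1)),
      (↑(g x) : EuclideanSpace ℝ (Fin (n + 1))) i = ‖φ x‖⁻¹ * φ x i := by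
    intro x hx i
    have := hgeq ⟨x, hx⟩
    rw [hfdef] at this
    have h2 : (↑(g x) : EuclideanSpace ℝ (Fin (n + 1))) = ‖φ x‖⁻¹ • φ x := by
      rw [this]
    rw [h2, PiLp.smul_apply, smul_eq_mul]
  have hnmA : ∀ (x : X), x ∈ A →
      SphereHigson.nm (↑(g x) : EuclideanSpace ℝ (Fin (n + 1))) = ‖φ x‖⁻¹ := by
    intro x hx
    obtain ⟨i0, hi0⟩ := id hx
    have h2 : (↑(g x) : EuclideanSpace ℝ (Fin (n + 1))) = ‖φ x‖⁻¹ • φ x := by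
      have := hgeq ⟨x, hx⟩
      rw [hfdef] at this
      rw [this]
    rw [h2, SphereHigson.nm_smul _ (by positivity : (0:ℝ) ≤ ‖φ x‖⁻¹)]
    have hnmφ : SphereHigson.nm (φ x) = 1 := by
      apply le_antisymm
      · apply SphereHigson.nm_le_of
        intro i
        rw [hφcoord]
        exact hclamp_bd _ _
      · rw [← hi0]
        exact SphereHigson.abs_coord_le_nm _ i0
    rw [hnmφ, mul_one]
  -- sphere coordinates agree with clampH on membership events
  have hHone : ∀ j x, x ∈ Dj j → H j x = 1 := by
    intro j x hx
    rw [hHdef]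
    dsimp only
    split_ifs with hj
    · set i : Fin (n + 1) := ⟨j, hj⟩ with hidef
      have hemb : emb i = j := Fin.ext rfl
      have hcl : clampH j x = 1 := hclamp_one j x hx
      have hxA : x ∈ A := ⟨i, by rw [hφcoord, hemb, hcl]; norm_num⟩
      rw [hgA x hxA i, hnmA x hxA]
      rw [hφcoord, hemb, hcl]
      have := hφpos x hxA
      field_simp
    · exact hclamp_one j x hx
  have hHnegone : ∀ j x, (∀ u ∈ Dj j, s ≤ dist x u) → H j x = -1 := by
    intro j x hx
    rw [hHdef]
    dsimp only
    split_ifs with hj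
    · set i : Fin (n + 1) := ⟨j, hj⟩ with hidef
      have hemb : emb i = j := Fin.ext rfl
      have hcl : clampH j x = -1 := hclamp_negone j x hx
      have hxA : x ∈ A := ⟨i, by rw [hφcoord, hemb, hcl]; norm_num⟩
      rw [hgA x hxA i, hnmA x hxA]
      rw [hφcoord, hemb, hcl]
      have := hφpos x hxA
      field_simp
    · exact hclamp_negone j x hx
  have hHlip : ∀ j x y, |H j x - H j y| ≤ κ / s * dist x y := by
    intro j x y
    rw [hHdef]
    dsimp only
    split_ifs with hj
    · set u : EuclideanSpace ℝ (Fin (n + 1)) := ↑(g x) with hudef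
      set v : EuclideanSpace ℝ (Fin (n + 1)) := ↑(g y) with hvdef
      set i : Fin (n + 1) := ⟨j, hj⟩ with hidef
      set Nu : ℝ := SphereHigson.nm u with hNudef
      set Nv : ℝ := SphereHigson.nm v with hNvdef
      have hNu : 1 / sq ≤ Nu := hnm_low x
      have hNv : 1 / sq ≤ Nv := hnm_low y
      have hNu0 : 0 < Nu := hnm_pos x
      have hNv0 : 0 < Nv := hnm_pos y
      have hkey : u i / Nu - v i / Nv = ((u i - v i) * Nv + v i * (Nv - Nu)) / (Nu * Nv) := by
        field_simp
        ring
      have hnum : |(u i - v i) * Nv + v i * (Nv - Nu)| ≤ Nv * (2 * dist u v) := by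
        calc |(u i - v i) * Nv + v i * (Nv - Nu)|
            ≤ |(u i - v i) * Nv| + |v i * (Nv - Nu)| := abs_add_le _ _
          _ = |u i - v i| * Nv + |v i| * |Nv - Nu| := by
              rw [abs_mul, abs_mul, abs_of_pos hNv0]
          _ ≤ dist u v * Nv + Nv * dist u v := by
              apply add_le_add
              · exact mul_le_mul_of_nonneg_right
                  (SphereHigson.abs_coord_sub_le_dist u v i) hNv0.le
              · calc |v i| * |Nv - Nu| ≤ Nv * |Nv - Nu| :=
                      mul_le_mul_of_nonneg_right (SphereHigson.abs_coord_le_nm v i)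
                        (abs_nonneg _)
                  _ ≤ Nv * dist u v := by
                      apply mul_le_mul_of_nonneg_left _ hNv0.le
                      rw [abs_sub_comm]
                      have := SphereHigson.abs_nm_sub_nm_le v u
                      rw [dist_comm v u] at this
                      rw [abs_sub_comm]
                      exact this
          _ = Nv * (2 * dist u v) := by ring
      have hquot : |u i / Nu - v i / Nv| ≤ 2 * sq * dist u v := by
        rw [hkey, abs_div, abs_of_pos (by positivity : (0:ℝ) < Nu * Nv)]
        rw [div_le_iff₀ (by positivity : (0:ℝ) < Nu * Nv)]
        have hsqNu : 1 ≤ sq * Nu := by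
          rw [div_le_iff₀ hsq0] at hNu
          linarith
        calc |(u i - v i) * Nv + v i * (Nv - Nu)| ≤ Nv * (2 * dist u v) := hnum
          _ = 1 * (2 * dist u v) * Nv := by ring
          _ ≤ sq * Nu * (2 * dist u v) * Nv := by
              apply mul_le_mul_of_nonneg_right _ hNv0.le
              apply mul_le_mul_of_nonneg_right hsqNu (by positivity)
          _ = 2 * sq * dist u v * (Nu * Nv) := by ring
      have hduv : dist u v = dist (g x) (g y) := (Subtype.dist_eq (g x) (g y)).symm
      calc |u i / Nu - v i / Nv| ≤ 2 * sq * dist u v := hquot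
        _ = 2 * sq * dist (g x) (g y) := by rw [hduv]
        _ ≤ 2 * sq * (Ce * lamf * dist x y) := by
            apply mul_le_mul_of_nonneg_left (hglip x y) (by positivity)
        _ ≤ κ / s * dist x y := by
            have e1 : 2 * sq * (Ce * lamf) = 8 * ((n : ℝ) + 1) * Ce / s := by
              rw [hlamfdef, ← hsqsq]
              field_simp
              ring
            have e2 : 8 * ((n : ℝ) + 1) * Ce / s ≤ κ / s := by
              rw [div_le_div_iff_of_pos_right hspos, hκdef]
              linarith
            calc 2 * sq * (Ce * lamf * dist x y) = 2 * sq * (Ce * lamf) * dist x y := by ring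
              _ ≤ κ / s * dist x y :=
                  mul_le_mul_of_nonneg_right (le_trans (le_of_eq e1) e2) dist_nonneg
    · calc |clampH j x - clampH j y| ≤ 2 / s * dist x y := hclamp_lip j x y
        _ ≤ κ / s * dist x y := by
            apply mul_le_mul_of_nonneg_right _ dist_nonneg
            rw [div_le_div_iff_of_pos_right hspos]
            linarith
  have hHdecisive : ∀ x, ∃ j : Fin (k + 1), H j x = 1 ∨ H j x = -1 := by
    intro x
    set u : EuclideanSpace ℝ (Fin (n + 1)) := ↑(g x) with hudef
    obtain ⟨i, hi⟩ := SphereHigson.exists_nm_eq u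
    have hipos : 0 < |u i| := by rw [← hi]; exact hnm_pos x
    refine ⟨emb i, ?_⟩
    have hj : ((emb i : Fin (k + 1)) : ℕ) < n + 1 := i.2
    rw [hHdef]
    dsimp only
    rw [dif_pos hj]
    have hieq : (⟨(emb i : Fin (k + 1)), hj⟩ : Fin (n + 1)) = i := Fin.ext rfl
    rw [hieq]
    rcases lt_or_ge 0 (u i) with hpos | hneg
    · left
      rw [hi, abs_of_pos hpos]
      field_simp
      rfl
    · right
      have hlt : u i < 0 := lt_of_le_of_ne hneg (by
        intro hc
        rw [hc] at hipos
        simp at hipos)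
      rw [hi, abs_of_neg hlt]
      show u i / -u i = -1
      rw [div_neg, div_self hlt.ne]
  -- derived separation facts
  have hQfar : ∀ j x, H j x = -1 → ∀ u ∈ Dj j, 2 * r ≤ dist x u := by
    intro j x hx u hu
    have h1 : H j u = 1 := hHone j u hu
    have h2 := hHlip j x u
    rw [hx, h1] at h2
    have h3 : |(-1 : ℝ) - 1| = 2 := by norm_num
    rw [h3] at h2
    have h4 : κ / s = 1 / r := by
      rw [hsdef]
      field_simp
    rw [h4] at h2
    rw [div_mul_eq_mul_div, le_div_iff₀ hrpos] at h2
    linarith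
  have hQnear : ∀ j x, H j x = 1 → ∃ u ∈ Dj j, dist x u < s := by
    intro j x hx
    by_contra hc
    push_neg at hc
    have := hHnegone j x (fun u hu => hc u hu)
    rw [hx] at this
    norm_num at this
  have hQsep : ∀ j x y, H j x = 1 → H j y = -1 → 2 * r ≤ dist x y := by
    intro j x y hx hy
    have h2 := hHlip j x y
    rw [hx, hy] at h2
    have h3 : |(1 : ℝ) - -1| = 2 := by norm_num
    rw [h3] at h2
    have h4 : κ / s = 1 / r := by
      rw [hsdef]
      field_simp
    rw [h4, div_mul_eq_mul_div, le_div_iff₀ hrpos] at h2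
    linarith
  -- the new cover
  set star : Fin (k + 1) → Set X → Set X := fun j V =>
    V ∪ {x | H j x = 1 ∧ ∃ v ∈ V, dist x v < s} with hstardef
  set strand : Fin (k + 1) → Set X → Set X := fun j W =>
    {x | x ∈ W ∧ H j x = -1} with hstranddef
  refine ⟨fun j => (star j '' U j.castSucc) ∪ (strand j '' U (Fin.last (k + 1))), ?_, ?_, ?_⟩
  · -- cover
    intro x
    obtain ⟨idx, V, hV, hxV⟩ := hUcov x
    rcases Fin.eq_castSucc_or_eq_last idx with ⟨j, rfl⟩ | rfl
    · exact ⟨j, star j V, Set.mem_union_left _ ⟨V, hV, rfl⟩, Set.mem_union_left _ hxV⟩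
    · obtain ⟨j, hj⟩ := hHdecisive x
      rcases hj with hj1 | hjm1
      · obtain ⟨u, hu, hdu⟩ := hQnear j x hj1
        obtain ⟨V', hV', huV'⟩ := hu
        refine ⟨j, star j V', Set.mem_union_left _ ⟨V', hV', rfl⟩, ?_⟩
        exact Set.mem_union_right _ ⟨hj1, u, huV', hdu⟩
      · exact ⟨j, strand j V, Set.mem_union_right _ ⟨V, hV, rfl⟩, ⟨hxV, hjm1⟩⟩
  · -- r-disjointness
    intro j Y hY Z hZ hne x hxY y hyZ
    have hstar_near : ∀ V : Set X, ∀ z ∈ star j V, ∃ v ∈ V, dist z v < s := by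
      intro V z hz
      rcases hz with hz | hz
      · exact ⟨z, hz, by rw [dist_self]; exact hspos⟩
      · exact hz.2
    have hSs : S - 2 * s = 2 * r := by
      rw [hSdef, hsdef, hKdef]
      ring
    rcases hY with ⟨V, hV, rfl⟩ | ⟨W, hW, rfl⟩
    · rcases hZ with ⟨V', hV', rfl⟩ | ⟨W', hW', rfl⟩
      · -- star vs star
        have hVne : V ≠ V' := by
          intro hc
          rw [hc] at hne
          exact hne rfl
        obtain ⟨v, hv, hdv⟩ := hstar_near V x hxY
        obtain ⟨v', hv', hdv'⟩ := hstar_near V' y hyZ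
        have hsep := hUdisj j.castSucc V hV V' hV' hVne v hv v' hv'
        have htri : dist v v' ≤ dist x v + dist x y + dist y v' := by
          calc dist v v' ≤ dist v x + dist x v' := dist_triangle v x v'
            _ ≤ dist v x + (dist x y + dist y v') := by
                linarith [dist_triangle x y v']
            _ = dist x v + dist x y + dist y v' := by rw [dist_comm v x]; ring
        linarith
      · -- star vs strand
        have hym1 : H j y = -1 := hyZ.2
        rcases hxY with hxV | hxE
        · have hxD : x ∈ Dj j := ⟨V, hV, hxV⟩
          have := hQfar j y hym1 x hxD
          rw [dist_comm y x] at this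
          linarith
        · have := hQsep j x y hxE.1 hym1
          linarith
    · rcases hZ with ⟨V', hV', rfl⟩ | ⟨W', hW', rfl⟩
      · -- strand vs star
        have hxm1 : H j x = -1 := hxY.2
        rcases hyZ with hyV | hyE
        · have hyD : y ∈ Dj j := ⟨V', hV', hyV⟩
          have := hQfar j x hxm1 y hyD
          linarith
        · have := hQsep j y x hyE.1 hxm1
          rw [dist_comm y x] at this
          linarith
      · -- strand vs strand
        have hWne : W ≠ W' := by
          intro hc
          rw [hc] at hne
          exact hne rfl
        have := hUdisj (Fin.last (k + 1)) W hW W' hW' hWne x hxY.1 y hyZ.1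
        linarith
  · -- diameter
    intro j Y hY x hxY y hyY
    have hstar_near : ∀ V : Set X, ∀ z ∈ star j V, ∃ v ∈ V, dist z v < s := by
      intro V z hz
      rcases hz with hz | hz
      · exact ⟨z, hz, by rw [dist_self]; exact hspos⟩
      · exact hz.2
    have hC₁r : C₁ * r = C₀ * S + 2 * s := by
      rw [hC₁def, hSdef, hsdef]
      ring
    rcases hY with ⟨V, hV, rfl⟩ | ⟨W, hW, rfl⟩
    · obtain ⟨v, hv, hdv⟩ := hstar_near V x hxY
      obtain ⟨v', hv', hdv'⟩ := hstar_near V y hyY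
      have hdvv := hUdiam j.castSucc V hV v hv v' hv'
      calc dist x y ≤ dist x v + dist v v' + dist v' y := by
            linarith [dist_triangle x v y, dist_triangle v v' y]
        _ ≤ s + C₀ * S + s := by
            rw [dist_comm v' y] at *
            linarith
        _ = C₁ * r := by rw [hC₁r]; ring
    · have := hUdiam (Fin.last (k + 1)) W hW x hxY.1 y hyY.1
      calc dist x y ≤ C₀ * S := this
        _ ≤ C₁ * r := by
            rw [hC₁r]
            linarith [hspos]

theorem sphere_large_scale_extensor_iff_higson_asdim
    {X : Type*} [MetricSpace X] (N : ℕ) (hN : HigsonAsdimLE X N) (n : ℕ) :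
    LargeScaleLipschitzExtensorOf X (Metric.sphere (0 : EuclideanSpace ℝ (Fin (n + 1))) 1) ↔
      HigsonAsdimLE X n := by
  constructor
  · intro hext
    have key : ∀ d : ℕ, HigsonAsdimLE X (n + d) → HigsonAsdimLE X n := by
      intro d
      induction d with
      | zero => exact id
      | succ d ih =>
          intro h'
          exact ih (higson_decrement n (n + d) (Nat.le_add_right n d) hext h')
    exact key N (higson_mono (Nat.le_add_left N n) hN)
  · exact higson_to_extensor n
end

section
/- For a metric space X the following are equivalent: (a) the asymptotic dimension of X with the Higson property is at most 0; (b) every nonempty discrete metric space Y is a large scale Lipschitz extensor of X; (c) the two-point space S⁰ = {−1, 1} ⊆ ℝ is a large scale Lipschitz extensor of X. -/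
theorem fwd_aux {X : Type*} [MetricSpace X] {Y : Type*} [MetricSpace Y]
    (hX : HigsonAsdimLE X 0)
    (hdisc : ∃ δ : ℝ, 0 < δ ∧ ∀ x y : Y, x ≠ y → δ < dist x y) :
    LargeScaleLipschitzExtensorOf X Y := by
  classical
  obtain ⟨C, hC, M, hM, hcov⟩ := hX
  obtain ⟨δ, hδ, hgap⟩ := hdisc
  have hsame : ∀ u v : Y, dist u v ≤ δ → u = v := by
    intro u v h
    by_contra hne
    exact absurd h (not_le.mpr (hgap u v hne))
  refine ⟨1 + 3*C + 2*C^2, by positivity, δ / ((C+1)*(M+1)), by positivity, ?_⟩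
  intro A hA lam hlam hlamM f hf
  obtain ⟨a₀, ha₀⟩ := hA
  set R : ℝ := δ / ((C+1)*lam) with hRdef
  have hCl : (0:ℝ) < (C+1)*lam := by positivity
  have hR0 : 0 < R := div_pos hδ hCl
  have hRM : M < R := by
    have h1 : lam * ((C+1)*(M+1)) < δ := (lt_div_iff₀ (by positivity)).mp hlamM
    rw [hRdef, lt_div_iff₀ hCl]
    nlinarith
  have hrk : ∀ k : ℕ, M < R * 2^k := by
    intro k
    have h2 : (1:ℝ) ≤ 2^k := one_le_pow₀ (by norm_num)
    nlinarith
  choose U hUcov hUdisj hUdiam using fun k : ℕ => hcov (R * 2^k) (hrk k)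
  choose idx V hVU hxV using fun (k : ℕ) (x : X) => hUcov k x
  have key2 : ∀ (k : ℕ) (x y : X), dist x y ≤ R*2^k → V k x = V k y := by
    intro k x y hd
    by_contra hne
    have hx1 := (idx k x).isLt
    have hy1 := (idx k y).isLt
    have hidx : idx k x = idx k y := Fin.ext (by omega)
    have := hUdisj k (idx k x) (V k x) (hVU k x) (V k y) (hidx ▸ hVU k y) hne x (hxV k x) y
      (hxV k y)
    linarith
  have key3 : ∀ (k : ℕ) (x : X), ∀ z ∈ V k x, dist x z ≤ C*(R*2^k) :=
    fun k x z hz => hUdiam k (idx k x) (V k x) (hVU k x) x (hxV k x) z hz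
  have hex : ∀ x : X, ∃ k : ℕ, ((V k x) ∩ A).Nonempty := by
    intro x
    obtain ⟨n, hn⟩ := pow_unbounded_of_one_lt (dist x a₀ / R) (by norm_num : (1:ℝ) < 2)
    refine ⟨n, a₀, ?_, ha₀⟩
    have hd : dist x a₀ ≤ R * 2^n := by
      rw [div_lt_iff₀ hR0] at hn
      nlinarith
    rw [key2 n x a₀ hd]
    exact hxV n a₀
  set ch : Set X → A := fun S =>
    if h : (S ∩ A).Nonempty then ⟨h.some, h.some_mem.2⟩ else ⟨a₀, ha₀⟩ with hch
  have hchmem : ∀ (S : Set X), (S ∩ A).Nonempty → (↑(ch S) : X) ∈ S := by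
    intro S hS
    rw [hch]
    simp only [dif_pos hS]
    exact hS.some_mem.1
  set g : X → Y := fun x => f (ch (V (Nat.find (hex x)) x)) with hg
  have hlamR : lam * R = δ / (C+1) := by
    rw [hRdef]
    field_simp
  have hgext : ∀ a : A, g ↑a = f a := by
    intro a
    have h0 : ((V 0 (↑a:X)) ∩ A).Nonempty := ⟨↑a, hxV 0 ↑a, a.2⟩
    have hkk0 : Nat.find (hex ↑a) = 0 := (Nat.find_eq_zero _).mpr h0
    have hbmem : (↑(ch (V 0 (↑a:X))) : X) ∈ V 0 (↑a:X) := hchmem _ h0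
    have hdab : dist (↑a:X) ↑(ch (V 0 (↑a:X))) ≤ C*(R*2^0) := key3 0 ↑a _ hbmem
    have hdf : dist (f (ch (V 0 (↑a:X)))) (f a) ≤ δ := by
      have h1 := hf (ch (V 0 (↑a:X))) a
      have h2 : dist (↑(ch (V 0 (↑a:X))) : X) ↑a ≤ C * R := by
        rw [dist_comm]
        simpa using hdab
      have h3 : lam * (C * R) ≤ δ := by
        have he : lam * (C * R) = C * (lam * R) := by ring
        rw [he, hlamR]
        have he2 : C * (δ / (C+1)) = (C * δ) / (C+1) := by ring
        rw [he2, div_le_iff₀ (by positivity)]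
        nlinarith
      calc dist (f (ch (V 0 (↑a:X)))) (f a) ≤ lam * dist (↑(ch (V 0 (↑a:X))) : X) ↑a := h1
        _ ≤ lam * (C * R) := by nlinarith
        _ ≤ δ := h3
    show f (ch (V (Nat.find (hex ↑a)) ↑a)) = f a
    rw [hkk0]
    exact hsame _ _ hdf
  have hmain : ∀ x y : X, Nat.find (hex x) ≤ Nat.find (hex y) →
      dist (g x) (g y) ≤ (1 + 3*C + 2*C^2) * lam * dist x y := by
    intro x y hxy
    set m := Nat.find (hex x) with hm
    set n := Nat.find (hex y) with hn
    by_cases hV : V m x = V m y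
    · have hmem : ((V m y) ∩ A).Nonempty := hV ▸ Nat.find_spec (hex x)
      have hnm : n = m := le_antisymm (Nat.find_le hmem) hxy
      have : g x = g y := by
        show f (ch (V m x)) = f (ch (V n y))
        rw [hnm, hV]
      rw [this, dist_self]
      positivity
    · have hd : R*2^m < dist x y := by
        by_contra h
        push_neg at h
        exact hV (key2 m x y h)
      have haxm : (↑(ch (V m x)) : X) ∈ V m x := hchmem _ (Nat.find_spec (hex x))
      have haym : (↑(ch (V n y)) : X) ∈ V n y := hchmem _ (Nat.find_spec (hex y))
      have h1 : dist x ↑(ch (V m x)) ≤ C * dist x y := by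
        have := key3 m x _ haxm
        nlinarith
      have h2 : dist y ↑(ch (V n y)) ≤ 2*C*(1+C) * dist x y := by
        have hkey3 := key3 n y _ haym
        rcases eq_or_lt_of_le hxy with heq | hlt
        · have h2n : R * 2^n < dist x y := by rw [← heq]; exact hd
          nlinarith [dist_nonneg (x := x) (y := y), mul_nonneg hC.le (dist_nonneg (x := x) (y := y)), sq_nonneg C]
        · obtain ⟨j, hj⟩ : ∃ j, n = j + 1 := ⟨n - 1, by omega⟩
          have h3 : ¬((V j y ∩ A).Nonempty) := Nat.find_min (hex y) (by omega)
          have h4 : (↑(ch (V m x)) : X) ∉ V j y :=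
            fun hmem => h3 ⟨↑(ch (V m x)), hmem, (ch (V m x)).2⟩
          have h5 : R*2^j < dist y ↑(ch (V m x)) := by
            by_contra h
            push_neg at h
            exact h4 ((key2 j y ↑(ch (V m x)) h) ▸ hxV j ↑(ch (V m x)))
          have h6 : R * 2^n = 2 * (R * 2^j) := by rw [hj, pow_succ]; ring
          have h7 : dist y ↑(ch (V m x)) ≤ dist x y + C * dist x y := by
            calc dist y ↑(ch (V m x)) ≤ dist y x + dist x ↑(ch (V m x)) := dist_triangle _ _ _
              _ ≤ dist x y + C * dist x y := by rw [dist_comm y x]; linarith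
          nlinarith [dist_nonneg (x := x) (y := y), mul_nonneg hC.le (dist_nonneg (x := x) (y := y))]
      have htri : dist (↑(ch (V m x)) : X) ↑(ch (V n y)) ≤
          dist (↑(ch (V m x)) : X) x + dist x y + dist y ↑(ch (V n y)) := dist_triangle4 _ _ _ _
      calc dist (g x) (g y) = dist (f (ch (V m x))) (f (ch (V n y))) := rfl
        _ ≤ lam * dist (↑(ch (V m x)) : X) ↑(ch (V n y)) := hf _ _
        _ ≤ lam * (dist (↑(ch (V m x)) : X) x + dist x y + dist y ↑(ch (V n y))) := by
            nlinarith [mul_le_mul_of_nonneg_left htri hlam.le]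
        _ ≤ (1 + 3*C + 2*C^2) * lam * dist x y := by
            rw [dist_comm (↑(ch (V m x)) : X) x]
            nlinarith [mul_le_mul_of_nonneg_left h1 hlam.le,
              mul_le_mul_of_nonneg_left h2 hlam.le,
              mul_nonneg hlam.le (dist_nonneg (x := x) (y := y))]
  refine ⟨g, hgext, ?_⟩
  intro x y
  rcases le_total (Nat.find (hex x)) (Nat.find (hex y)) with h | h
  · exact hmain x y h
  · rw [dist_comm (g x) (g y), dist_comm x y]
    exact hmain y x h

theorem back_aux {X E : Type*} [MetricSpace X] [MetricSpace E] (p q : E)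
    (hpq : dist p q = 2) (hsep : ∀ u v : E, dist u v ≤ 1 → u = v)
    (h : LargeScaleLipschitzExtensorOf X E) : HigsonAsdimLE X 0 := by
  classical
  obtain ⟨C, hC, M, hM, hext⟩ := h
  refine ⟨2*C, by positivity, 1/(C*M), by positivity, ?_⟩
  intro r hr
  have hr0 : 0 < r := lt_trans (by positivity) hr
  set lam : ℝ := 1/(C*r) with hlamdef
  have hlam0 : 0 < lam := by positivity
  have hlamM : lam < M := by
    rw [hlamdef, div_lt_iff₀ (by positivity)]
    rw [div_lt_iff₀ (by positivity)] at hr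
    nlinarith
  set Rel : X → X → Prop := Relation.ReflTransGen (fun a b : X => dist a b ≤ r) with hRel
  have hsymb : Symmetric (fun a b : X => dist a b ≤ r) := by
    intro u v huv
    show dist v u ≤ r
    rw [dist_comm]
    exact huv
  have hsym : ∀ {a b : X}, Rel a b → Rel b a :=
    fun hab => by
      haveI : Std.Symm (fun a b : X => dist a b ≤ r) := ⟨hsymb⟩
      exact Std.Symm.symm (r := Relation.ReflTransGen (fun a b : X => dist a b ≤ r)) _ _ hab
  have key : ∀ x y : X, Rel x y → dist x y ≤ 2*C*r := by
    intro x y hxy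
    by_contra hgt
    push_neg at hgt
    have hne : x ≠ y := by
      intro h
      rw [h, dist_self] at hgt
      nlinarith
    set A : Set X := {x, y} with hA
    have hxA : x ∈ A := Set.mem_insert _ _
    have hyA : y ∈ A := Set.mem_insert_of_mem _ rfl
    set f : A → E := fun z => if (z:X) = x then p else q with hfdef
    have hf : ∀ a b : A, dist (f a) (f b) ≤ lam * dist (a:X) (b:X) := by
      intro a b
      have hmem : ∀ c : A, (c:X) = x ∨ (c:X) = y := fun c => c.2
      have hkey : ∀ u v : X, u = x → v = y → 2 ≤ lam * dist u v := by
        intro u v hu hv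
        rw [hu, hv, hlamdef, div_mul_eq_mul_div, le_div_iff₀ (by positivity)]
        nlinarith
      by_cases hax : (a:X) = x <;> by_cases hbx : (b:X) = x
      · simp only [hfdef, if_pos hax, if_pos hbx, dist_self]
        positivity
      · have hby : (b:X) = y := (hmem b).resolve_left hbx
        simp only [hfdef, if_pos hax, if_neg hbx]
        rw [hpq]
        exact hkey _ _ hax hby
      · have hay : (a:X) = y := (hmem a).resolve_left hax
        simp only [hfdef, if_neg hax, if_pos hbx]
        rw [dist_comm, hpq, dist_comm (a:X) (b:X)]
        exact hkey _ _ hbx hay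
      · have hay : (a:X) = y := (hmem a).resolve_left hax
        have hby : (b:X) = y := (hmem b).resolve_left hbx
        simp only [hfdef, if_neg hax, if_neg hbx, dist_self]
        positivity
    obtain ⟨g, hg, hglip⟩ := hext A ⟨x, hxA⟩ lam hlam0 hlamM f hf
    have hstep : ∀ u v : X, dist u v ≤ r → g u = g v := by
      intro u v huv
      apply hsep
      calc dist (g u) (g v) ≤ C * lam * dist u v := hglip u v
        _ ≤ C * lam * r := by
            have : (0:ℝ) ≤ C * lam := by positivity
            nlinarith
        _ = 1 := by rw [hlamdef]; field_simp
    have hconst : ∀ z : X, Rel x z → g x = g z := by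
      intro z hz
      induction hz with
      | refl => rfl
      | tail hab hbc ih => exact ih.trans (hstep _ _ hbc)
    have hgx : g x = p := by
      have h1 := hg ⟨x, hxA⟩
      have h2 : f ⟨x, hxA⟩ = p := by simp [hfdef]
      rw [← h2]
      exact h1
    have hgy : g y = q := by
      have h1 := hg ⟨y, hyA⟩
      have h2 : f ⟨y, hyA⟩ = q := by
        simp only [hfdef]
        rw [if_neg (fun hc => hne hc.symm)]
      rw [← h2]
      exact h1
    have : dist p q = 0 := by rw [← hgx, ← hgy, hconst y hxy, dist_self]
    rw [hpq] at this
    norm_num at this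
  refine ⟨fun _ => {S | ∃ a : X, S = {z | Rel a z}}, ?_, ?_, ?_⟩
  · intro x
    exact ⟨0, {z | Rel x z}, ⟨x, rfl⟩, Relation.ReflTransGen.refl⟩
  · rintro i V ⟨a, rfl⟩ W ⟨b, rfl⟩ hVW x hx y hy
    by_contra hle
    push_neg at hle
    apply hVW
    have hax : Rel a x := hx
    have hby : Rel b y := hy
    have hab : Rel a b := (hax.trans (Relation.ReflTransGen.single hle)).trans (hsym hby)
    ext z
    simp only [Set.mem_setOf_eq]
    exact ⟨fun hz => (hsym hab).trans hz, fun hz => hab.trans hz⟩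
  · rintro i V ⟨a, rfl⟩ x hx y hy
    exact key x y ((hsym hx).trans hy)


private lemma s0_mem_neg : (-1 : ℝ) ∈ ({-1, 1} : Set ℝ) := by norm_num

private lemma s0_mem_pos : (1 : ℝ) ∈ ({-1, 1} : Set ℝ) := by norm_num

private lemma s0_sep : ∀ u v : ({-1, 1} : Set ℝ), dist u v ≤ 1 → u = v := by
  rintro ⟨u, hu⟩ ⟨v, hv⟩ h
  rw [Subtype.dist_eq, Real.dist_eq] at h
  simp only [Set.mem_insert_iff, Set.mem_singleton_iff] at hu hv
  apply Subtype.ext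
  rcases hu with rfl | rfl <;> rcases hv with rfl | rfl <;> first | rfl | (simp at h; norm_num at h)

private lemma s0_dist :
    dist (⟨-1, s0_mem_neg⟩ : ({-1, 1} : Set ℝ)) (⟨1, s0_mem_pos⟩ : ({-1, 1} : Set ℝ)) = 2 := by
  rw [Subtype.dist_eq, Real.dist_eq]
  norm_num

private lemma s0u_sep : ∀ u v : ULift.{u} ({-1, 1} : Set ℝ), dist u v ≤ 1 → u = v := by
  intro u v h
  rw [ULift.dist_eq] at h
  have := s0_sep u.down v.down h
  cases u; cases v; simpa using this

private lemma s0u_dist :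
    dist (ULift.up (⟨-1, s0_mem_neg⟩ : ({-1, 1} : Set ℝ)) : ULift.{u} ({-1, 1} : Set ℝ))
      (ULift.up (⟨1, s0_mem_pos⟩ : ({-1, 1} : Set ℝ)) : ULift.{u} ({-1, 1} : Set ℝ)) = 2 := by
  rw [ULift.dist_eq]
  exact s0_dist

private lemma s0u_back {X : Type*} [MetricSpace X]
    (h : LargeScaleLipschitzExtensorOf X (ULift.{u} ({-1, 1} : Set ℝ))) :
    HigsonAsdimLE X 0 :=
  back_aux (ULift.up ⟨-1, s0_mem_neg⟩) (ULift.up ⟨1, s0_mem_pos⟩) s0u_dist.{u} s0u_sep.{u} h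

theorem higson_asdim_zero_iff_large_scale_extensors
    {X : Type*} [MetricSpace X] :
    (HigsonAsdimLE X 0 ↔
      ∀ (Y : Type*) [MetricSpace Y], Nonempty Y →
        (∃ δ : ℝ, 0 < δ ∧ ∀ x y : Y, x ≠ y → δ < dist x y) →
        LargeScaleLipschitzExtensorOf X Y) ∧
    (HigsonAsdimLE X 0 ↔
      LargeScaleLipschitzExtensorOf X ({-1, 1} : Set ℝ)) := by
  constructor
  · constructor
    · intro h Y _ _ hdisc
      exact fwd_aux h hdisc
    · intro hb
      exact s0u_back (hb (ULift ({-1, 1} : Set ℝ)) ⟨ULift.up ⟨1, s0_mem_pos⟩⟩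
        ⟨1, one_pos, fun u v hne => not_le.mp (fun hle => hne (s0u_sep u v hle))⟩)
  · constructor
    · intro h
      exact fwd_aux h ⟨1, one_pos, fun u v hne => not_le.mp (fun hle => hne (s0_sep u v hle))⟩
    · intro h
      exact back_aux (⟨-1, s0_mem_neg⟩ : ({-1, 1} : Set ℝ)) ⟨1, s0_mem_pos⟩
        s0_dist s0_sep h
end

section
/- Let (X,d) be a metric space and suppose X = A ∪ B for subsets A, B ⊆ X (each with the induced metric). Then for every integer n ≥ 0, the macroscopic Nagata-Assouad dimension of X is at most n if and only if the macroscopic Nagata-Assouad dimensions of A and of B are both at most n; consequently the macroscopic Nagata-Assouad dimension of X equals the maximum of those of A and B. -/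
open scoped Classical

/-- Nagata-Assouad dimension at most `n` for the distance function `d` on `X`: there is
`C > 0` such that for every `r > 0` there is a cover of `X` splitting into `n+1` families,
each `r`-disjoint with respect to `d`, with all members of `d`-diameter at most `C·r`. -/
def NagataDimWithLE {X : Type*} (d : X → X → ℝ) (n : ℕ) : Prop :=
  ∃ C : ℝ, 0 < C ∧ ∀ r : ℝ, 0 < r →
    ∃ U : Fin (n + 1) → Set (Set X),
      (∀ x : X, ∃ i, ∃ V ∈ U i, x ∈ V) ∧
      (∀ i, ∀ V ∈ U i, ∀ W ∈ U i, V ≠ W → ∀ x ∈ V, ∀ y ∈ W, r < d x y) ∧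
      (∀ i, ∀ V ∈ U i, ∀ x ∈ V, ∀ y ∈ V, d x y ≤ C * r)

/-- The macroscopic Nagata-Assouad dimension of a metric space `X` is at most `n`, i.e. the
Nagata-Assouad dimension of `(X, max(d,1))` is at most `n`. -/
def MacroscopicNagataDimLE (X : Type*) [MetricSpace X] (n : ℕ) : Prop :=
  NagataDimWithLE (fun x y : X => if x = y then 0 else max (dist x y) 1) n

section Aux

variable {X : Type*} [MetricSpace X]

/-- The macroscopic (truncated from below at 1) metric. -/
noncomputable def mnd (X : Type*) [MetricSpace X] : X → X → ℝ :=
  fun x y => if x = y then 0 else max (dist x y) 1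

lemma mnd_self (x : X) : mnd X x x = 0 := by simp [mnd]

lemma mnd_nonneg (x y : X) : 0 ≤ mnd X x y := by
  unfold mnd
  split
  · exact le_refl 0
  · exact le_trans zero_le_one (le_max_right _ _)

lemma mnd_comm (x y : X) : mnd X x y = mnd X y x := by
  unfold mnd
  by_cases h : x = y
  · simp [h]
  · simp [h, Ne.symm h, dist_comm]

lemma mnd_triangle (x y z : X) : mnd X x z ≤ mnd X x y + mnd X y z := by
  by_cases hxz : x = z
  · rw [hxz, mnd_self]
    exact add_nonneg (mnd_nonneg _ _) (mnd_nonneg _ _)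
  by_cases hxy : x = y
  · subst hxy; rw [mnd_self]; simp
  by_cases hyz : y = z
  · subst hyz; rw [mnd_self]; simp
  · unfold mnd
    simp only [if_neg hxz, if_neg hxy, if_neg hyz]
    apply max_le
    · exact (dist_triangle x y z).trans (add_le_add (le_max_left _ _) (le_max_left _ _))
    · calc (1 : ℝ) ≤ max (dist x y) 1 := le_max_right _ _
        _ ≤ max (dist x y) 1 + max (dist y z) 1 := by
            have : (0:ℝ) ≤ max (dist y z) 1 := le_trans zero_le_one (le_max_right _ _)
            linarith

lemma mnd_subtype (s : Set X) :
    (fun a b : s => mnd X (a : X) (b : X)) = mnd s := by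
  funext a b
  unfold mnd
  by_cases h : a = b
  · simp [h]
  · have h' : (a : X) ≠ (b : X) := fun hc => h (Subtype.ext hc)
    simp [h, h', Subtype.dist_eq]

lemma macroscopic_eq (n : ℕ) :
    MacroscopicNagataDimLE X n ↔ NagataDimWithLE (mnd X) n := Iff.rfl

/-- Restriction to a subspace. -/
lemma nagata_restrict {d : X → X → ℝ} {n : ℕ} (h : NagataDimWithLE d n) (s : Set X) :
    NagataDimWithLE (fun a b : s => d (a : X) (b : X)) n := by
  obtain ⟨C, hC, hcov⟩ := h
  refine ⟨C, hC, fun r hr => ?_⟩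
  obtain ⟨U, hUcov, hUdisj, hUdiam⟩ := hcov r hr
  refine ⟨fun i => (fun V => Subtype.val ⁻¹' V) '' U i, ?_, ?_, ?_⟩
  · intro x
    obtain ⟨i, V, hV, hxV⟩ := hUcov (x : X)
    exact ⟨i, _, ⟨V, hV, rfl⟩, hxV⟩
  · rintro i _ ⟨V, hV, rfl⟩ _ ⟨W, hW, rfl⟩ hne x hx y hy
    have hVW : V ≠ W := fun h => hne (by rw [h])
    exact hUdisj i V hV W hW hVW _ hx _ hy
  · rintro i _ ⟨V, hV, rfl⟩ x hx y hy
    exact hUdiam i V hV _ hx _ hy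

/-- The hard direction: union theorem for the macroscopic Nagata–Assouad dimension. -/
lemma nagata_union (A B : Set X) (hAB : A ∪ B = Set.univ) (n : ℕ)
    (hA : NagataDimWithLE (mnd A) n) (hB : NagataDimWithLE (mnd B) n) :
    NagataDimWithLE (mnd X) n := by
  obtain ⟨CA, hCA, hAcov⟩ := hA
  obtain ⟨CB, hCB, hBcov⟩ := hB
  refine ⟨CB * (2 * CA + 4) + 2 * CA + 2 + CA, by nlinarith, fun r hr => ?_⟩
  set C : ℝ := CB * (2 * CA + 4) + 2 * CA + 2 + CA with hCdef
  set s : ℝ := (2 * CA + 4) * r with hsdef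
  have hs : 0 < s := by nlinarith
  obtain ⟨UA, hUAcov, hUAdisj, hUAdiam⟩ := hAcov r hr
  obtain ⟨UB, hUBcov, hUBdisj, hUBdiam⟩ := hBcov s hs
  -- push the covers forward to `X`
  set 𝒰 : Fin (n + 1) → Set (Set X) := fun i => (fun V => Subtype.val '' V) '' UA i with h𝒰
  set 𝒱 : Fin (n + 1) → Set (Set X) := fun i => (fun V => Subtype.val '' V) '' UB i with h𝒱
  have coverU : ∀ x ∈ A, ∃ i, ∃ S ∈ 𝒰 i, x ∈ S := by
    intro x hx
    obtain ⟨i, V, hV, hxV⟩ := hUAcov ⟨x, hx⟩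
    exact ⟨i, _, ⟨V, hV, rfl⟩, ⟨⟨x, hx⟩, hxV, rfl⟩⟩
  have coverV : ∀ x ∈ B, ∃ i, ∃ S ∈ 𝒱 i, x ∈ S := by
    intro x hx
    obtain ⟨i, V, hV, hxV⟩ := hUBcov ⟨x, hx⟩
    exact ⟨i, _, ⟨V, hV, rfl⟩, ⟨⟨x, hx⟩, hxV, rfl⟩⟩
  have hinj : Function.Injective (fun V : Set A => Subtype.val '' V) :=
    Set.image_injective.mpr Subtype.val_injective
  have hinjB : Function.Injective (fun V : Set B => Subtype.val '' V) :=
    Set.image_injective.mpr Subtype.val_injective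
  have disjU : ∀ i, ∀ S ∈ 𝒰 i, ∀ T ∈ 𝒰 i, S ≠ T →
      ∀ x ∈ S, ∀ y ∈ T, r < mnd X x y := by
    rintro i _ ⟨V, hV, rfl⟩ _ ⟨W, hW, rfl⟩ hne _ ⟨a, ha, rfl⟩ _ ⟨b, hb, rfl⟩
    have hVW : V ≠ W := fun h => hne (by rw [h])
    have := hUAdisj i V hV W hW hVW a ha b hb
    rwa [← mnd_subtype A] at this
  have diamU : ∀ i, ∀ S ∈ 𝒰 i, ∀ x ∈ S, ∀ y ∈ S, mnd X x y ≤ CA * r := by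
    rintro i _ ⟨V, hV, rfl⟩ _ ⟨a, ha, rfl⟩ _ ⟨b, hb, rfl⟩
    have := hUAdiam i V hV a ha b hb
    rwa [← mnd_subtype A] at this
  have disjV : ∀ i, ∀ S ∈ 𝒱 i, ∀ T ∈ 𝒱 i, S ≠ T →
      ∀ x ∈ S, ∀ y ∈ T, s < mnd X x y := by
    rintro i _ ⟨V, hV, rfl⟩ _ ⟨W, hW, rfl⟩ hne _ ⟨a, ha, rfl⟩ _ ⟨b, hb, rfl⟩
    have hVW : V ≠ W := fun h => hne (by rw [h])
    have := hUBdisj i V hV W hW hVW a ha b hb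
    rwa [← mnd_subtype B] at this
  have diamV : ∀ i, ∀ S ∈ 𝒱 i, ∀ x ∈ S, ∀ y ∈ S, mnd X x y ≤ CB * s := by
    rintro i _ ⟨V, hV, rfl⟩ _ ⟨a, ha, rfl⟩ _ ⟨b, hb, rfl⟩
    have := hUBdiam i V hV a ha b hb
    rwa [← mnd_subtype B] at this
  -- the construction
  set close : Set X → Set X → Prop :=
    fun S T => ∃ x ∈ S, ∃ y ∈ T, mnd X x y ≤ r with hclose
  set big : Fin (n + 1) → Set X → Set X :=
    fun i T => T ∪ ⋃₀ {S | S ∈ 𝒰 i ∧ close S T} with hbig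
  refine ⟨fun i => {E | ∃ T ∈ 𝒱 i, E = big i T} ∪
      {S | S ∈ 𝒰 i ∧ ∀ T ∈ 𝒱 i, ¬ close S T}, ?_, ?_, ?_⟩
  -- reach lemma
  case _ =>
    -- cover
    intro x
    have hx : x ∈ A ∪ B := by rw [hAB]; trivial
    rcases hx with hx | hx
    · obtain ⟨i, S, hS, hxS⟩ := coverU x hx
      by_cases h : ∃ T ∈ 𝒱 i, close S T
      · obtain ⟨T, hT, hcl⟩ := h
        exact ⟨i, big i T, Or.inl ⟨T, hT, rfl⟩, Or.inr ⟨S, ⟨hS, hcl⟩, hxS⟩⟩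
      · push_neg at h
        exact ⟨i, S, Or.inr ⟨hS, h⟩, hxS⟩
    · obtain ⟨i, T, hT, hxT⟩ := coverV x hx
      exact ⟨i, big i T, Or.inl ⟨T, hT, rfl⟩, Or.inl hxT⟩
  case _ =>
    -- disjointness
    have reach : ∀ i, ∀ T, T ∈ 𝒱 i → ∀ p ∈ big i T, ∃ y ∈ T, mnd X p y ≤ CA * r + r := by
      intro i T hT p hp
      rcases hp with hp | hp
      · exact ⟨p, hp, by rw [mnd_self]; nlinarith⟩
      · obtain ⟨S, ⟨hS, x, hxS, y, hyT, hxy⟩, hpS⟩ := hp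
        refine ⟨y, hyT, ?_⟩
        calc mnd X p y ≤ mnd X p x + mnd X x y := mnd_triangle _ _ _
          _ ≤ CA * r + r := add_le_add (diamU i S hS p hpS x hxS) hxy
    intro i E hE F hF hEF p hp q hq
    rcases hE with ⟨T, hT, rfl⟩ | ⟨hSE, hstandE⟩
    · rcases hF with ⟨T', hT', rfl⟩ | ⟨hSF, hstandF⟩
      · -- two big sets
        have hTT' : T ≠ T' := fun h => hEF (by rw [h])
        obtain ⟨y, hy, hpy⟩ := reach i T hT p hp
        obtain ⟨y', hy', hqy'⟩ := reach i T' hT' q hq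
        have h1 : s < mnd X y y' := disjV i T hT T' hT' hTT' y hy y' hy'
        have h2 : mnd X y y' ≤ mnd X y p + mnd X p q + mnd X q y' := by
          calc mnd X y y' ≤ mnd X y p + mnd X p y' := mnd_triangle _ _ _
            _ ≤ mnd X y p + (mnd X p q + mnd X q y') := by
                exact add_le_add le_rfl (mnd_triangle _ _ _)
            _ = _ := by ring
        rw [mnd_comm y p] at h2
        have := hpy
        nlinarith [h1, h2, hpy, hqy']
      · -- big vs standalone
        rcases hp with hp | ⟨S', ⟨hS', hcl'⟩, hpS'⟩
        · -- p ∈ T, q ∈ F standalone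
          have := hstandF T hT
          simp only [hclose] at this
          push_neg at this
          have := this q hq p hp
          rwa [mnd_comm] at this
        · -- p in attached S', q in standalone F; S' ≠ F
          have hne : S' ≠ F := by
            intro h; exact hstandF T hT (h ▸ hcl')
          exact disjU i S' hS' F hSF hne p hpS' q hq
    · rcases hF with ⟨T', hT', rfl⟩ | ⟨hSF, hstandF⟩
      · -- standalone vs big
        rcases hq with hq | ⟨S', ⟨hS', hcl'⟩, hqS'⟩
        · have := hstandE T' hT'
          simp only [hclose] at this
          push_neg at this
          exact this p hp q hq
        · have hne : E ≠ S' := by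
            intro h; exact hstandE T' hT' (h ▸ hcl')
          exact disjU i E hSE S' hS' hne p hp q hqS'
      · exact disjU i E hSE F hSF hEF p hp q hq
  case _ =>
    -- diameter
    have reach : ∀ i, ∀ T, T ∈ 𝒱 i → ∀ p ∈ big i T, ∃ y ∈ T, mnd X p y ≤ CA * r + r := by
      intro i T hT p hp
      rcases hp with hp | hp
      · exact ⟨p, hp, by rw [mnd_self]; nlinarith⟩
      · obtain ⟨S, ⟨hS, x, hxS, y, hyT, hxy⟩, hpS⟩ := hp
        refine ⟨y, hyT, ?_⟩
        calc mnd X p y ≤ mnd X p x + mnd X x y := mnd_triangle _ _ _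
          _ ≤ CA * r + r := add_le_add (diamU i S hS p hpS x hxS) hxy
    intro i E hE p hp q hq
    rcases hE with ⟨T, hT, rfl⟩ | ⟨hSE, _⟩
    · obtain ⟨y, hy, hpy⟩ := reach i T hT p hp
      obtain ⟨y', hy', hqy'⟩ := reach i T hT q hq
      have h1 : mnd X y y' ≤ CB * s := diamV i T hT y hy y' hy'
      have h2 : mnd X p q ≤ mnd X p y + mnd X y y' + mnd X y' q := by
        calc mnd X p q ≤ mnd X p y + mnd X y q := mnd_triangle _ _ _
          _ ≤ mnd X p y + (mnd X y y' + mnd X y' q) := by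
              exact add_le_add le_rfl (mnd_triangle _ _ _)
          _ = _ := by ring
      rw [mnd_comm y' q] at h2
      rw [hCdef]
      rw [hsdef] at h1
      nlinarith [h1, h2, hpy, hqy']
    · have := diamU i E hSE p hp q hq
      rw [hCdef]
      nlinarith [this, hr, hCA, hCB]

end Aux

theorem macroscopic_nagata_dim_union
    {X : Type*} [MetricSpace X] (A B : Set X) (hAB : A ∪ B = Set.univ) (n : ℕ) :
    MacroscopicNagataDimLE X n ↔ (MacroscopicNagataDimLE A n ∧ MacroscopicNagataDimLE B n) := by
  rw [macroscopic_eq, macroscopic_eq, macroscopic_eq]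
  constructor
  · intro h
    constructor
    · have := nagata_restrict (d := mnd X) h A
      rwa [mnd_subtype] at this
    · have := nagata_restrict (d := mnd X) h B
      rwa [mnd_subtype] at this
  · rintro ⟨hA, hB⟩
    exact nagata_union A B hAB n hA hB
end
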